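/- arXiv:2001.00312 — 4 statements merged into one kernel-verified Lean document; each statement's English description precedes it below -/
import Mathlib

section
/- For every integer n ≥ 2 and for k ∈ {2, 3}, the locating chromatic number of the complete n-ary tree T(n,k) equals n + k − 1. -/
/-- Vertices of the complete `n`-ary tree of depth `k`:
sequences over an `n`-letter alphabet (encoded as `Fin n`) of length at most `k`. -/
def naryVertex (n k : ℕ) : Type := {l : List (Fin n) // l.length ≤ k}

/-- The complete `n`-ary tree `T(n,k)`: the empty sequence is the root (center), and
each sequence is adjacent to its one-letter extensions. -/
def naryTree (n k : ℕ) : SimpleGraph (naryVertex n k) where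
  Adj u v := (∃ a : Fin n, u.1 = a :: v.1) ∨ (∃ a : Fin n, v.1 = a :: u.1)
  symm := ⟨fun u v h => h.symm⟩
  loopless := ⟨by
    rintro u (⟨a, ha⟩ | ⟨a, ha⟩) <;>
      simpa using congrArg List.length ha⟩

/-- The root (center) of `T(n,k)`: the empty sequence. -/
def naryRoot (n k : ℕ) : naryVertex n k := ⟨[], Nat.zero_le k⟩

/-- `c` is a locating `m`-coloring of `G`: a proper vertex coloring with colors in
`{1,…,m}` such that all vertices have distinct color codes, where the color code of `v`
is the tuple of distances `d(v, C_i) = min {d(v,x) : x ∈ C_i}` to the color classes. -/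
def IsLocatingColoring {V : Type*} (G : SimpleGraph V) (m : ℕ) (c : V → ℕ) : Prop :=
  (∀ v, c v ∈ Finset.Icc 1 m) ∧
  (∀ u v, G.Adj u v → c u ≠ c v) ∧
  Function.Injective
    (fun v => fun i : ℕ => sInf {d : ℕ | ∃ x, c x = i ∧ G.dist v x = d})

/-- The locating chromatic number of `G`: the least `m` such that `G` has a
locating `m`-coloring. -/
noncomputable def locatingChromaticNumber {V : Type*} (G : SimpleGraph V) : ℕ :=
  sInf {m | ∃ c : V → ℕ, IsLocatingColoring G m c}


section GeneralGraph

variable {V : Type*} (G : SimpleGraph V)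

/-- The color code entry. -/
noncomputable def gcode (c : V → ℕ) (v : V) (i : ℕ) : ℕ :=
  sInf {d : ℕ | ∃ x, c x = i ∧ G.dist v x = d}

variable {G}

lemma gcode_eq {c : V → ℕ} {v : V} {i d : ℕ}
    (h1 : ∃ x, c x = i ∧ G.dist v x = d)
    (h2 : ∀ x, c x = i → d ≤ G.dist v x) : gcode G c v i = d := by
  refine le_antisymm (Nat.sInf_le h1) (le_csInf ⟨d, h1⟩ ?_)
  rintro e ⟨x, hx, rfl⟩
  exact h2 x hx

lemma gcode_eq_zero_of_unused {c : V → ℕ} {v : V} {i : ℕ}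
    (h : ∀ x, c x ≠ i) : gcode G c v i = 0 := by
  have : {d : ℕ | ∃ x, c x = i ∧ G.dist v x = d} = ∅ := by
    ext d; simp only [Set.mem_setOf_eq, Set.mem_empty_iff_false, iff_false]
    rintro ⟨x, hx, -⟩; exact h x hx
  rw [gcode, this, Nat.sInf_empty]

lemma dist_le_two_cases {u x : V} (hr : G.Reachable u x) (h : G.dist u x ≤ 2) :
    u = x ∨ G.Adj u x ∨ ∃ y, G.Adj u y ∧ G.Adj y x := by
  obtain ⟨p, hp⟩ := hr.exists_walk_length_eq_dist
  rw [← hp] at h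
  cases p with
  | nil => exact Or.inl rfl
  | cons h1 q =>
    cases q with
    | nil => exact Or.inr (Or.inl h1)
    | cons h2 r =>
      cases r with
      | nil => exact Or.inr (Or.inr ⟨_, h1, h2⟩)
      | cons h3 s => simp [SimpleGraph.Walk.length_cons] at h

lemma dist_eq_two {u x : V} (hne : u ≠ x) (hnadj : ¬ G.Adj u x)
    {y : V} (h1 : G.Adj u y) (h2 : G.Adj y x) : G.dist u x = 2 := by
  have hle : G.dist u x ≤ 2 := by
    simpa using SimpleGraph.dist_le (SimpleGraph.Walk.cons h1 (SimpleGraph.Walk.cons h2 SimpleGraph.Walk.nil))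
  have hr : G.Reachable u x := ⟨SimpleGraph.Walk.cons h1 (SimpleGraph.Walk.cons h2 SimpleGraph.Walk.nil)⟩
  have h0 : G.dist u x ≠ 0 := fun h => hne (hr.dist_eq_zero_iff.mp h)
  have h1' : G.dist u x ≠ 1 := fun h => hnadj (SimpleGraph.dist_eq_one_iff_adj.mp h)
  omega

lemma dist_eq_three {u x : V} (hne : u ≠ x) (hnadj : ¬ G.Adj u x)
    (hno2 : ∀ y, G.Adj u y → ¬ G.Adj y x)
    {y z : V} (h1 : G.Adj u y) (h2 : G.Adj y z) (h3 : G.Adj z x) : G.dist u x = 3 := by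
  have hle : G.dist u x ≤ 3 := by
    simpa using SimpleGraph.dist_le
      (SimpleGraph.Walk.cons h1 (SimpleGraph.Walk.cons h2 (SimpleGraph.Walk.cons h3 SimpleGraph.Walk.nil)))
  have hr : G.Reachable u x :=
    ⟨SimpleGraph.Walk.cons h1 (SimpleGraph.Walk.cons h2 (SimpleGraph.Walk.cons h3 SimpleGraph.Walk.nil))⟩
  have : ¬ G.dist u x ≤ 2 := by
    intro h
    rcases dist_le_two_cases hr h with h | h | ⟨y', hy1, hy2⟩
    · exact hne h
    · exact hnadj h
    · exact hno2 y' hy1 hy2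
  omega

lemma dist_ge_two {u x : V} (hne : u ≠ x) (hnadj : ¬ G.Adj u x) : 2 ≤ G.dist u x ∨ G.dist u x = 0 := by
  rcases Nat.eq_zero_or_pos (G.dist u x) with h | h
  · exact Or.inr h
  · left
    have h1' : G.dist u x ≠ 1 := fun h => hnadj (SimpleGraph.dist_eq_one_iff_adj.mp h)
    omega

end GeneralGraph

section swapsec
variable {V : Type*} {G : SimpleGraph V} [DecidableEq V]

lemma dist_map_le (f : G →g G) (u v : V) (hr : G.Reachable u v) :
    G.dist (f u) (f v) ≤ G.dist u v := by
  obtain ⟨p, hp⟩ := hr.exists_walk_length_eq_dist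
  calc G.dist (f u) (f v) ≤ (p.map f).length := SimpleGraph.dist_le _
  _ = p.length := SimpleGraph.Walk.length_map _ _
  _ = G.dist u v := hp

/-- swapping two vertices with identical neighborhoods (and nonadjacent) is a hom -/
lemma swap_hom_adj {ℓ ℓ' : V} (hnadj : ¬ G.Adj ℓ ℓ')
    (hnbr : ∀ x, G.Adj ℓ x ↔ G.Adj ℓ' x) {u v : V} (h : G.Adj u v) :
    G.Adj (Equiv.swap ℓ ℓ' u) (Equiv.swap ℓ ℓ' v) := by
  rcases eq_or_ne u ℓ with rfl | hu1
  · rcases eq_or_ne v ℓ' with rfl | hv2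
    · exact absurd h hnadj
    · have hv1 : v ≠ u := fun hh => G.loopless.irrefl u (hh ▸ h)
      rw [Equiv.swap_apply_left, Equiv.swap_apply_of_ne_of_ne hv1 hv2]
      exact (hnbr v).mp h
  · rcases eq_or_ne u ℓ' with rfl | hu2
    · rcases eq_or_ne v ℓ with rfl | hv1
      · exact absurd h.symm hnadj
      · have hv2 : v ≠ u := fun hh => G.loopless.irrefl u (hh ▸ h)
        rw [Equiv.swap_apply_right, Equiv.swap_apply_of_ne_of_ne hv1 hv2]
        exact (hnbr v).mpr h
    · rw [Equiv.swap_apply_of_ne_of_ne hu1 hu2]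
      rcases eq_or_ne v ℓ with rfl | hv1
      · rw [Equiv.swap_apply_left]
        exact ((hnbr u).mp h.symm).symm
      · rcases eq_or_ne v ℓ' with rfl | hv2
        · rw [Equiv.swap_apply_right]
          exact ((hnbr u).mpr h.symm).symm
        · rw [Equiv.swap_apply_of_ne_of_ne hv1 hv2]
          exact h

lemma mySwapDist (hpre : G.Preconnected) {ℓ ℓ' : V} (hnadj : ¬ G.Adj ℓ ℓ')
    (hnbr : ∀ x, G.Adj ℓ x ↔ G.Adj ℓ' x) (u v : V) :
    G.dist (Equiv.swap ℓ ℓ' u) (Equiv.swap ℓ ℓ' v) = G.dist u v := by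
  let f : G →g G := ⟨(Equiv.swap ℓ ℓ').toFun, fun h => swap_hom_adj hnadj hnbr h⟩
  refine le_antisymm (dist_map_le f u v (hpre u v)) ?_
  have h2 := dist_map_le f (Equiv.swap ℓ ℓ' u) (Equiv.swap ℓ ℓ' v) (hpre _ _)
  have e1 : f (Equiv.swap ℓ ℓ' u) = u := Equiv.swap_apply_self _ _ _
  have e2 : f (Equiv.swap ℓ ℓ' v) = v := Equiv.swap_apply_self _ _ _
  rwa [e1, e2] at h2

end swapsec

namespace naryAux
variable {n k : ℕ}


variable {n k : ℕ}

instance : DecidableEq (naryVertex n k) :=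
  inferInstanceAs (DecidableEq {l : List (Fin n) // l.length ≤ k})

lemma vext {u v : naryVertex n k} (h : u.1 = v.1) : u = v := Subtype.ext h

lemma adj_iff {u v : naryVertex n k} :
    (naryTree n k).Adj u v ↔ (∃ a : Fin n, u.1 = a :: v.1) ∨ (∃ a : Fin n, v.1 = a :: u.1) :=
  Iff.rfl

lemma len_le (v : naryVertex n k) : v.1.length ≤ k := v.2

/-- child is adjacent to parent -/
lemma adj_cons (a : Fin n) (t : List (Fin n)) (h : (a :: t).length ≤ k) :
    (naryTree n k).Adj ⟨a :: t, h⟩ ⟨t, by simp at h; omega⟩ :=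
  Or.inl ⟨a, rfl⟩

/-- neighbors of a vertex of full length k: only the parent -/
lemma adj_full {a : Fin n} {t : List (Fin n)} {h : (a :: t).length ≤ k}
    (hfull : (a :: t).length = k) {x : naryVertex n k}
    (hadj : (naryTree n k).Adj ⟨a :: t, h⟩ x) : x.1 = t := by
  rcases hadj with ⟨b, hb⟩ | ⟨b, hb⟩
  · exact (List.cons.injEq _ _ _ _ ▸ hb).2.symm ▸ rfl
  · exfalso
    have := x.2
    rw [hb] at this
    simp at this hfull
    omega

lemma reachable_root (v : naryVertex n k) : (naryTree n k).Reachable v (naryRoot n k) := by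
  obtain ⟨l, hl⟩ := v
  induction l with
  | nil => exact SimpleGraph.Reachable.refl _
  | cons a t ih =>
    have ht : t.length ≤ k := by simp at hl; omega
    exact (SimpleGraph.Adj.reachable (adj_cons a t hl)).trans (ih ht)

lemma preconnected : (naryTree n k).Preconnected := fun u v =>
  (reachable_root u).trans (reachable_root v).symm

lemma dist_eq_zero_iff {u v : naryVertex n k} : (naryTree n k).dist u v = 0 ↔ u = v := by
  constructor
  · intro h
    rcases SimpleGraph.dist_eq_zero_iff_eq_or_not_reachable.mp h with h | h
    · exact h
    · exact absurd (preconnected u v) h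
  · rintro rfl; exact SimpleGraph.dist_self

lemma dist_adj {u v : naryVertex n k} (h : (naryTree n k).Adj u v) :
    (naryTree n k).dist u v = 1 := SimpleGraph.dist_eq_one_iff_adj.mpr h



def phi (j b : Fin n) : ℕ := if b.val < j.val then b.val + 1 else b.val + 2
def chi (j b : Fin n) : ℕ := if b = j then n + 2 else j.val + 2
def skipN (e x : ℕ) : ℕ := if x < e then x else x + 1
def theta (j b a : Fin n) : ℕ :=
  skipN (max (phi j b) (chi j b)) (skipN (min (phi j b) (chi j b)) (a.val + 1))

lemma phi_ge (j b : Fin n) : 1 ≤ phi j b := by unfold phi; split <;> omega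
lemma phi_le (j b : Fin n) : phi j b ≤ n + 1 := by
  have := b.isLt; unfold phi; split <;> omega
lemma phi_ne_parent (j b : Fin n) : phi j b ≠ j.val + 1 := by
  unfold phi; split <;> omega
lemma phi_lt_big (j b : Fin n) : phi j b ≠ n + 2 := by
  have := phi_le j b; omega
lemma phi_inj {j b b' : Fin n} (h : phi j b = phi j b') : b = b' := by
  have hb := b.isLt; have hb' := b'.isLt
  unfold phi at h
  apply Fin.ext
  split at h <;> split at h <;> omega

lemma phi_diag (j : Fin n) : phi j j = j.val + 2 := by unfold phi; simp

lemma chi_spec (j b : Fin n) : (b = j ∧ chi j b = n + 2) ∨ (b ≠ j ∧ chi j b = j.val + 2) := by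
  unfold chi; by_cases h : b = j <;> simp [h]

lemma chi_ge (j b : Fin n) : 1 ≤ chi j b := by have := j.isLt; unfold chi; split <;> omega
lemma chi_le (j b : Fin n) : chi j b ≤ n + 2 := by have := j.isLt; unfold chi; split <;> omega
lemma chi_ne_parent (j b : Fin n) : chi j b ≠ j.val + 1 := by
  have := j.isLt; unfold chi; split <;> omega

lemma chi_ne_phi (j b : Fin n) : chi j b ≠ phi j b := by
  have hb := b.isLt; have hj := j.isLt
  unfold chi phi
  split <;> split <;> rename_i h1 h2
  · omega
  · simp [h1] at h2; omega
  · intro h; rw [Fin.ext_iff] at h1; omega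
  · intro h; rw [Fin.ext_iff] at h1; omega

lemma skipN_ne (e x : ℕ) : skipN e x ≠ e := by unfold skipN; split <;> omega
lemma skipN_inj {e x y : ℕ} (h : skipN e x = skipN e y) : x = y := by
  unfold skipN at h; split at h <;> split at h <;> omega
lemma skipN_le {e x : ℕ} : skipN e x ≤ x + 1 := by unfold skipN; split <;> omega
lemma skipN_ge {e x : ℕ} : x ≤ skipN e x := by unfold skipN; split <;> omega

lemma skip2_ne {e1 e2 x : ℕ} (h : e1 < e2) :
    skipN e2 (skipN e1 x) ≠ e1 ∧ skipN e2 (skipN e1 x) ≠ e2 := by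
  unfold skipN; split <;> split <;> omega

lemma theta_ne_phi (j b a : Fin n) : theta j b a ≠ phi j b := by
  have hne := chi_ne_phi j b
  unfold theta
  rcases le_or_gt (phi j b) (chi j b) with h | h
  · rw [max_eq_right h, min_eq_left h]
    exact (skip2_ne (by omega)).1
  · rw [max_eq_left h.le, min_eq_right h.le]
    exact (skip2_ne h).2

lemma theta_ne_chi (j b a : Fin n) : theta j b a ≠ chi j b := by
  have hne := chi_ne_phi j b
  unfold theta
  rcases le_or_gt (phi j b) (chi j b) with h | h
  · rw [max_eq_right h, min_eq_left h]
    exact (skip2_ne (by omega)).2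
  · rw [max_eq_left h.le, min_eq_right h.le]
    exact (skip2_ne h).1

lemma theta_ge (j b a : Fin n) : 1 ≤ theta j b a := by
  have h1 : a.val + 1 ≤ skipN (min (phi j b) (chi j b)) (a.val+1) := skipN_ge
  have h2 : skipN (min (phi j b) (chi j b)) (a.val+1) ≤
      skipN (max (phi j b) (chi j b)) (skipN (min (phi j b) (chi j b)) (a.val+1)) := skipN_ge
  unfold theta; omega

lemma theta_le (j b a : Fin n) : theta j b a ≤ n + 2 := by
  have ha := a.isLt
  have h1 : skipN (min (phi j b) (chi j b)) (a.val+1) ≤ a.val + 2 := skipN_le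
  have h2 : theta j b a ≤ skipN (min (phi j b) (chi j b)) (a.val+1) + 1 := skipN_le
  omega

lemma theta_inj {j b a a' : Fin n} (h : theta j b a = theta j b a') : a = a' := by
  have := skipN_inj (skipN_inj h)
  exact Fin.ext (by omega)

/-- injectivity of the pair (phi, chi) -/
lemma phi_chi_inj {j b j' b' : Fin n} (h1 : phi j b = phi j' b') (h2 : chi j b = chi j' b') :
    j = j' ∧ b = b' := by
  have hj := j.isLt; have hj' := j'.isLt
  rcases chi_spec j b with ⟨hbj, hc⟩ | ⟨hbj, hc⟩ <;>
    rcases chi_spec j' b' with ⟨hbj', hc'⟩ | ⟨hbj', hc'⟩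
  · rw [hbj, hbj', phi_diag, phi_diag] at h1
    have hjj : j = j' := Fin.ext (by omega)
    exact ⟨hjj, by rw [hbj, hbj', hjj]⟩
  · omega
  · omega
  · have hjj : j = j' := Fin.ext (by omega)
    subst hjj
    exact ⟨rfl, phi_inj h1⟩

/-- surjectivity helper -/
lemma surj_helper {m : ℕ} {f : Fin m → ℕ} {t : Finset ℕ} (hinj : Function.Injective f)
    (hmem : ∀ a, f a ∈ t) (hcard : t.card = m) : ∀ i ∈ t, ∃ a, f a = i := by
  classical
  intro i hi
  have hsub : Finset.image f Finset.univ ⊆ t := by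
    intro x hx; simp only [Finset.mem_image] at hx
    obtain ⟨a, -, rfl⟩ := hx; exact hmem a
  have hcard2 : (Finset.image f Finset.univ).card = m := by
    rw [Finset.card_image_of_injective _ hinj, Finset.card_univ, Fintype.card_fin]
  have := Finset.eq_of_subset_of_card_le hsub (by omega)
  rw [← this] at hi
  simp only [Finset.mem_image] at hi
  obtain ⟨a, -, ha⟩ := hi
  exact ⟨a, ha⟩

lemma phi_surj (j : Fin n) : ∀ i ∈ (Finset.Icc 1 (n+1)).erase (j.val + 1), ∃ b, phi j b = i := by
  apply surj_helper (fun _ _ h => phi_inj h)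
  · intro b
    rw [Finset.mem_erase, Finset.mem_Icc]
    exact ⟨phi_ne_parent j b, phi_ge j b, phi_le j b⟩
  · rw [Finset.card_erase_of_mem, Nat.card_Icc]
    · omega
    · rw [Finset.mem_Icc]; have := j.isLt; omega

lemma theta_surj (j b : Fin n) :
    ∀ i ∈ ((Finset.Icc 1 (n+2)).erase (phi j b)).erase (chi j b), ∃ a, theta j b a = i := by
  apply surj_helper (fun _ _ h => theta_inj h)
  · intro a
    rw [Finset.mem_erase, Finset.mem_erase, Finset.mem_Icc]
    exact ⟨theta_ne_chi j b a, theta_ne_phi j b a, theta_ge j b a, theta_le j b a⟩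
  · rw [Finset.card_erase_of_mem, Finset.card_erase_of_mem, Nat.card_Icc]
    · omega
    · rw [Finset.mem_Icc]; exact ⟨phi_ge j b, by have := phi_le j b; omega⟩
    · rw [Finset.mem_erase, Finset.mem_Icc]
      exact ⟨chi_ne_phi j b, chi_ge j b, chi_le j b⟩


end naryAux

section SwapCode
variable {V : Type*} [DecidableEq V] {G : SimpleGraph V}

lemma sInf_code_swap (hpre : G.Preconnected) {ℓ ℓ' : V} (hnadj : ¬ G.Adj ℓ ℓ')
    (hnbr : ∀ x, G.Adj ℓ x ↔ G.Adj ℓ' x) {c : V → ℕ} (hc : c ℓ = c ℓ') (i : ℕ) :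
    sInf {d : ℕ | ∃ x, c x = i ∧ G.dist ℓ x = d} =
      sInf {d : ℕ | ∃ x, c x = i ∧ G.dist ℓ' x = d} := by
  have key : ∀ x, c (Equiv.swap ℓ ℓ' x) = c x := by
    intro x
    rcases eq_or_ne x ℓ with rfl | h1
    · rw [Equiv.swap_apply_left]; exact hc.symm
    · rcases eq_or_ne x ℓ' with rfl | h2
      · rw [Equiv.swap_apply_right]; exact hc
      · rw [Equiv.swap_apply_of_ne_of_ne h1 h2]
  have hd : ∀ x, G.dist ℓ' (Equiv.swap ℓ ℓ' x) = G.dist ℓ x := by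
    intro x
    have h2 := mySwapDist hpre hnadj hnbr ℓ x
    rwa [Equiv.swap_apply_left] at h2
  have hd' : ∀ x, G.dist ℓ (Equiv.swap ℓ ℓ' x) = G.dist ℓ' x := by
    intro x
    have h2 := mySwapDist hpre hnadj hnbr ℓ' x
    rwa [Equiv.swap_apply_right] at h2
  congr 1
  ext d
  simp only [Set.mem_setOf_eq]
  constructor
  · rintro ⟨x, hx, rfl⟩
    exact ⟨Equiv.swap ℓ ℓ' x, (key x).trans hx, hd x⟩
  · rintro ⟨x, hx, rfl⟩
    exact ⟨Equiv.swap ℓ ℓ' x, (key x).trans hx, hd' x⟩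

end SwapCode

namespace naryAux
variable {n k : ℕ}

lemma not_adj_of_len {u v : naryVertex n k} (h : u.1.length = v.1.length) :
    ¬ (naryTree n k).Adj u v := by
  rintro (⟨a, ha⟩ | ⟨a, ha⟩) <;>
    · rw [ha] at h; simp at h

lemma ball1 {u x : naryVertex n k} (h : (naryTree n k).dist u x ≤ 1) :
    u = x ∨ (naryTree n k).Adj u x := by
  rcases Nat.le_one_iff_eq_zero_or_eq_one.mp h with h0 | h1
  · exact Or.inl (dist_eq_zero_iff.mp h0)
  · exact Or.inr (SimpleGraph.dist_eq_one_iff_adj.mp h1)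

lemma sibling_color_ne {c : naryVertex n k → ℕ}
    (hinj : Function.Injective
      (fun v => fun i : ℕ => sInf {d : ℕ | ∃ x, c x = i ∧ (naryTree n k).dist v x = d}))
    {a b : Fin n} {t : List (Fin n)} (hful : t.length + 1 = k) (hab : a ≠ b)
    (ha : (a::t).length ≤ k) (hb : (b::t).length ≤ k) :
    c ⟨a::t, ha⟩ ≠ c ⟨b::t, hb⟩ := by
  intro hc
  set ℓ : naryVertex n k := ⟨a::t, ha⟩ with hℓ
  set ℓ' : naryVertex n k := ⟨b::t, hb⟩ with hℓ'
  have hful' : (a::t : List (Fin n)).length = k := by simp; omega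
  have hful'' : (b::t : List (Fin n)).length = k := by simp; omega
  have hne : ℓ ≠ ℓ' := by
    intro h
    replace h := Subtype.ext_iff.mp h
    exact hab (List.head_eq_of_cons_eq h)
  have hnadj : ¬ (naryTree n k).Adj ℓ ℓ' := not_adj_of_len (show (a::t).length = (b::t).length by simp)
  have hnbr : ∀ x, (naryTree n k).Adj ℓ x ↔ (naryTree n k).Adj ℓ' x := by
    intro x
    constructor
    · intro h
      have := adj_full hful' h
      exact Or.inl ⟨b, by rw [this]⟩
    · intro h
      have := adj_full hful'' h
      exact Or.inl ⟨a, by rw [this]⟩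
  apply hne
  apply hinj
  funext i
  exact sInf_code_swap preconnected hnadj hnbr hc i

lemma no_locating_k2 (hn : 2 ≤ n) {c : naryVertex n 2 → ℕ}
    (hcol : ∀ v, c v ∈ Finset.Icc 1 n)
    (hprop : ∀ u v, (naryTree n 2).Adj u v → c u ≠ c v)
    (hinj : Function.Injective
      (fun v => fun i : ℕ => sInf {d : ℕ | ∃ x, c x = i ∧ (naryTree n 2).dist v x = d})) :
    False := by
  have h0 : 0 < n := by omega
  set j0 : Fin n := ⟨0, h0⟩
  set p : naryVertex n 2 := ⟨[j0], by simp⟩ with hp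
  set f : Fin n → naryVertex n 2 := fun a => ⟨[a, j0], by simp⟩ with hf
  have hcard : ((Finset.Icc 1 n).erase (c p)).card < Finset.univ.card (α := Fin n) := by
    rw [Finset.card_univ, Fintype.card_fin,
      Finset.card_erase_of_mem (hcol p), Nat.card_Icc]
    omega
  have hmaps : ∀ a ∈ Finset.univ (α := Fin n), c (f a) ∈ (Finset.Icc 1 n).erase (c p) := by
    intro a _
    rw [Finset.mem_erase]
    refine ⟨?_, hcol (f a)⟩
    exact hprop (f a) p (Or.inl ⟨a, rfl⟩)
  obtain ⟨x, -, y, -, hxy, hcxy⟩ :=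
    Finset.exists_ne_map_eq_of_card_lt_of_maps_to hcard hmaps
  exact sibling_color_ne hinj (t := [j0]) (by simp) hxy (by simp) (by simp) hcxy

end naryAux
namespace naryAux
section Three
variable {n : ℕ}

def W0 : naryVertex n 3 := ⟨[], by simp⟩
def W1 (j : Fin n) : naryVertex n 3 := ⟨[j], by simp⟩
def W2 (b j : Fin n) : naryVertex n 3 := ⟨[b, j], by simp⟩
def W3 (a b j : Fin n) : naryVertex n 3 := ⟨[a, b, j], by simp⟩

lemma shape3 (v : naryVertex n 3) :
    v = W0 ∨ (∃ j, v = W1 j) ∨ (∃ b j, v = W2 b j) ∨ (∃ a b j, v = W3 a b j) := by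
  obtain ⟨l, hl⟩ := v
  match l, hl with
  | [], _ => exact Or.inl (vext rfl)
  | [j], _ => exact Or.inr (Or.inl ⟨j, vext rfl⟩)
  | [b, j], _ => exact Or.inr (Or.inr (Or.inl ⟨b, j, vext rfl⟩))
  | [a, b, j], _ => exact Or.inr (Or.inr (Or.inr ⟨a, b, j, vext rfl⟩))
  | (a :: b :: c :: d :: t), hl => simp at hl; omega

lemma W1_ne_W0 (j : Fin n) : W1 j ≠ W0 := by
  intro h; replace h := Subtype.ext_iff.mp h; simp [W0, W1] at h
lemma W2_ne_W0 (b j : Fin n) : W2 b j ≠ W0 := by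
  intro h; replace h := Subtype.ext_iff.mp h; simp [W0, W2] at h
lemma W3_ne_W0 (a b j : Fin n) : W3 a b j ≠ W0 := by
  intro h; replace h := Subtype.ext_iff.mp h; simp [W0, W3] at h
lemma W2_ne_W1 (b j j' : Fin n) : W2 b j ≠ W1 j' := by
  intro h; replace h := Subtype.ext_iff.mp h; simp [W1, W2] at h
lemma W3_ne_W1 (a b j j' : Fin n) : W3 a b j ≠ W1 j' := by
  intro h; replace h := Subtype.ext_iff.mp h; simp [W1, W3] at h
lemma W3_ne_W2 (a b j b' j' : Fin n) : W3 a b j ≠ W2 b' j' := by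
  intro h; replace h := Subtype.ext_iff.mp h; simp [W2, W3] at h
lemma W1_inj {j j' : Fin n} (h : W1 j = W1 j') : j = j' := by
  replace h := Subtype.ext_iff.mp h; simpa [W1] using h
lemma W2_inj {b j b' j' : Fin n} (h : W2 b j = W2 b' j') : b = b' ∧ j = j' := by
  replace h := Subtype.ext_iff.mp h; simpa [W2] using h
lemma W3_inj {a b j a' b' j' : Fin n} (h : W3 a b j = W3 a' b' j') : a = a' ∧ b = b' ∧ j = j' := by
  replace h := Subtype.ext_iff.mp h; simpa [W3] using h

lemma adjW10 (j : Fin n) : (naryTree n 3).Adj (W1 j) W0 := Or.inl ⟨j, rfl⟩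
lemma adjW21 (b j : Fin n) : (naryTree n 3).Adj (W2 b j) (W1 j) := Or.inl ⟨b, rfl⟩
lemma adjW32 (a b j : Fin n) : (naryTree n 3).Adj (W3 a b j) (W2 b j) := Or.inl ⟨a, rfl⟩

lemma nbrW0 {x : naryVertex n 3} (h : (naryTree n 3).Adj W0 x) : ∃ j, x = W1 j := by
  rcases h with ⟨a, ha⟩ | ⟨a, ha⟩
  · exact absurd (congrArg List.length ha) (by simp [W0])
  · exact ⟨a, vext (by rw [ha]; rfl)⟩

lemma nbrW1 {j : Fin n} {x : naryVertex n 3} (h : (naryTree n 3).Adj (W1 j) x) :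
    x = W0 ∨ ∃ b, x = W2 b j := by
  rcases h with ⟨a, ha⟩ | ⟨a, ha⟩
  · left
    apply vext
    have : ([j] : List (Fin n)) = a :: x.1 := ha
    simpa [W0] using (List.cons.injEq _ _ _ _ ▸ this).2.symm
  · exact Or.inr ⟨a, vext (by rw [ha]; rfl)⟩

lemma nbrW2 {b j : Fin n} {x : naryVertex n 3} (h : (naryTree n 3).Adj (W2 b j) x) :
    x = W1 j ∨ ∃ a, x = W3 a b j := by
  rcases h with ⟨a, ha⟩ | ⟨a, ha⟩
  · left
    apply vext
    have : ([b, j] : List (Fin n)) = a :: x.1 := ha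
    have h2 := (List.cons.injEq _ _ _ _ ▸ this).2
    simp [W1, ← h2]
  · exact Or.inr ⟨a, vext (by rw [ha]; rfl)⟩

lemma nbrW3 {a b j : Fin n} {x : naryVertex n 3} (h : (naryTree n 3).Adj (W3 a b j) x) :
    x = W2 b j := by
  have := adj_full (h := (W3 a b j).2) (by simp [W3]) h
  exact vext this

lemma distW10 (j : Fin n) : (naryTree n 3).dist (W1 j) W0 = 1 := dist_adj (adjW10 j)
lemma distW21 (b j : Fin n) : (naryTree n 3).dist (W2 b j) (W1 j) = 1 := dist_adj (adjW21 b j)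
lemma distW32 (a b j : Fin n) : (naryTree n 3).dist (W3 a b j) (W2 b j) = 1 :=
  dist_adj (adjW32 a b j)

lemma distW20 (b j : Fin n) : (naryTree n 3).dist (W2 b j) W0 = 2 := by
  refine dist_eq_two (W2_ne_W0 b j) ?_ (adjW21 b j) (adjW10 j)
  intro h
  obtain ⟨j', hj'⟩ := nbrW0 h.symm
  exact W2_ne_W1 b j j' hj'

lemma distW30 (a b j : Fin n) : (naryTree n 3).dist (W3 a b j) W0 = 3 := by
  refine dist_eq_three (W3_ne_W0 a b j) ?_ ?_ (adjW32 a b j) (adjW21 b j) (adjW10 j)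
  · intro h
    obtain ⟨j', hj'⟩ := nbrW0 h.symm
    exact W3_ne_W1 a b j j' hj'
  · intro y hy hyx
    rw [nbrW3 hy] at hyx
    rcases nbrW2 hyx with h | ⟨a', h⟩
    · exact W1_ne_W0 j h.symm
    · exact W3_ne_W0 a' b j h.symm

lemma distW2sib {b b' j : Fin n} (h : b ≠ b') :
    (naryTree n 3).dist (W2 b j) (W2 b' j) = 2 := by
  refine dist_eq_two ?_ (not_adj_of_len (by simp [W2])) (adjW21 b j) (adjW21 b' j).symm
  intro hh; exact h (W2_inj hh).1

lemma distW3sib {a a' b j : Fin n} (h : a ≠ a') :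
    (naryTree n 3).dist (W3 a b j) (W3 a' b j) = 2 := by
  refine dist_eq_two ?_ (not_adj_of_len (by simp [W3])) (adjW32 a b j) (adjW32 a' b j).symm
  intro hh; exact h (W3_inj hh).1

lemma distW3W2 {a b b' j : Fin n} (h : b' ≠ b) :
    (naryTree n 3).dist (W3 a b j) (W2 b' j) = 3 := by
  refine dist_eq_three (W3_ne_W2 a b j b' j) ?_ ?_ (adjW32 a b j) (adjW21 b j) (adjW21 b' j).symm
  · intro hh
    exact h (W2_inj (nbrW3 hh)).1
  · intro y hy hyx
    rw [nbrW3 hy] at hyx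
    exact not_adj_of_len (by simp [W2]) hyx

end Three
end naryAux
namespace naryAux
section Lower3
variable {n : ℕ}

lemma no_locating_k3 (hn : 2 ≤ n) {c : naryVertex n 3 → ℕ}
    (hcol : ∀ v, c v ∈ Finset.Icc 1 (n+1))
    (hprop : ∀ u v, (naryTree n 3).Adj u v → c u ≠ c v)
    (hinj : Function.Injective
      (fun v => fun i : ℕ => sInf {d : ℕ | ∃ x, c x = i ∧ (naryTree n 3).dist v x = d})) :
    False := by
  have hcol' : ∀ v, 1 ≤ c v ∧ c v ≤ n + 1 := by
    intro v; have := hcol v; rw [Finset.mem_Icc] at this; exact this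
  -- sibling leaves have distinct colors
  have hsib : ∀ (b j : Fin n) {a a' : Fin n}, a ≠ a' → c (W3 a b j) ≠ c (W3 a' b j) := by
    intro b j a a' h
    exact sibling_color_ne hinj (t := [b, j]) (by simp) h (by simp) (by simp)
  -- leaves under a depth-2 vertex realize all colors but that of the parent
  have hsurj : ∀ (b j : Fin n), ∀ i ∈ (Finset.Icc 1 (n+1)).erase (c (W2 b j)),
      ∃ a, c (W3 a b j) = i := by
    intro b j
    apply surj_helper (f := fun a => c (W3 a b j))
    · intro a a' h
      by_contra hne
      exact hsib b j hne h
    · intro a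
      rw [Finset.mem_erase]
      exact ⟨hprop _ _ (adjW32 a b j), hcol _⟩
    · rw [Finset.card_erase_of_mem (hcol _), Nat.card_Icc]; omega
  -- pigeonhole on depth-2 vertices
  have hcard : (Finset.Icc 1 (n+1)).card < Finset.univ.card (α := Fin n × Fin n) := by
    rw [Finset.card_univ, Fintype.card_prod, Fintype.card_fin, Nat.card_Icc]
    have : 2 * n ≤ n * n := Nat.mul_le_mul_right n hn
    omega
  obtain ⟨p, -, q, -, hpq, hceq⟩ :=
    Finset.exists_ne_map_eq_of_card_lt_of_maps_to (f := fun p : Fin n × Fin n => c (W2 p.1 p.2))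
      hcard (fun p _ => hcol _)
  obtain ⟨b, j⟩ := p
  obtain ⟨b', j'⟩ := q
  simp only at hceq
  classical
  -- choose a color i distinct from the common depth-2 color
  set i : ℕ := if c (W2 b j) = 1 then 2 else 1 with hi
  have hii : 1 ≤ i ∧ i ≤ n + 1 ∧ i ≠ c (W2 b j) := by
    rw [hi]; split <;> omega
  have hmem1 : i ∈ (Finset.Icc 1 (n+1)).erase (c (W2 b j)) := by
    rw [Finset.mem_erase, Finset.mem_Icc]; exact ⟨hii.2.2, hii.1, hii.2.1⟩
  have hmem2 : i ∈ (Finset.Icc 1 (n+1)).erase (c (W2 b' j')) := by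
    rw [← hceq]; exact hmem1
  obtain ⟨a, ha⟩ := hsurj b j i hmem1
  obtain ⟨a', ha'⟩ := hsurj b' j' i hmem2
  -- the two leaves have equal color codes
  have key : ∀ (B J A : Fin n), c (W3 A B J) = i → ∀ i',
      sInf {d : ℕ | ∃ x, c x = i' ∧ (naryTree n 3).dist (W3 A B J) x = d} =
        (if i' = i then 0 else if i' = c (W2 B J) then 1 else
          if ∃ x, c x = i' then 2 else 0) := by
    intro B J A hA i'
    by_cases h1 : i' = i
    · rw [if_pos h1]
      refine gcode_eq ⟨W3 A B J, by rw [hA, h1], SimpleGraph.dist_self⟩ (fun x _ => Nat.zero_le _)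
    · rw [if_neg h1]
      by_cases h2 : i' = c (W2 B J)
      · rw [if_pos h2]
        refine gcode_eq ⟨W2 B J, h2.symm, distW32 A B J⟩ ?_
        intro x hx
        by_contra hlt
        have h0 : (naryTree n 3).dist (W3 A B J) x = 0 := by omega
        rw [dist_eq_zero_iff.mp h0] at hA
        rw [← hx, hA] at h1
        exact h1 rfl
      · rw [if_neg h2]
        by_cases h3 : ∃ x, c x = i'
        · rw [if_pos h3]
          obtain ⟨x0, hx0⟩ := h3
          have hIcc : i' ∈ (Finset.Icc 1 (n+1)).erase (c (W2 B J)) := by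
            rw [Finset.mem_erase]; exact ⟨h2, hx0 ▸ hcol x0⟩
          obtain ⟨a'', ha''⟩ := hsurj B J i' hIcc
          have hAa : a'' ≠ A := by
            intro h; rw [h, hA] at ha''; exact h1 ha''.symm
          refine gcode_eq ⟨W3 a'' B J, ha'', distW3sib hAa.symm⟩ ?_
          intro x hx
          by_contra hlt
          have hle : (naryTree n 3).dist (W3 A B J) x ≤ 1 := by omega
          rcases ball1 hle with h | h
          · rw [← h, hA] at hx; exact h1 hx.symm
          · rw [nbrW3 h] at hx; exact h2 hx.symm
        · rw [if_neg h3]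
          exact gcode_eq_zero_of_unused (fun x hx => h3 ⟨x, hx⟩)
  have hfun : (fun i' : ℕ => sInf {d : ℕ | ∃ x, c x = i' ∧ (naryTree n 3).dist (W3 a b j) x = d}) =
      (fun i' : ℕ => sInf {d : ℕ | ∃ x, c x = i' ∧ (naryTree n 3).dist (W3 a' b' j') x = d}) := by
    funext i'
    rw [key b j a ha i', key b' j' a' ha' i', hceq]
  have := hinj hfun
  obtain ⟨-, hb, hj⟩ := W3_inj this
  exact hpq (by rw [Prod.ext_iff]; exact ⟨hb, hj⟩)

end Lower3
end naryAux
namespace naryAux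
section Two
variable {n : ℕ}

def U0 : naryVertex n 2 := ⟨[], by simp⟩
def U1 (j : Fin n) : naryVertex n 2 := ⟨[j], by simp⟩
def U2 (b j : Fin n) : naryVertex n 2 := ⟨[b, j], by simp⟩

lemma shape2 (v : naryVertex n 2) :
    v = U0 ∨ (∃ j, v = U1 j) ∨ (∃ b j, v = U2 b j) := by
  obtain ⟨l, hl⟩ := v
  match l, hl with
  | [], _ => exact Or.inl (vext rfl)
  | [j], _ => exact Or.inr (Or.inl ⟨j, vext rfl⟩)
  | [b, j], _ => exact Or.inr (Or.inr ⟨b, j, vext rfl⟩)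
  | (a :: b :: c :: t), hl => simp at hl

lemma U1_ne_U0 (j : Fin n) : U1 j ≠ U0 := by
  intro h; replace h := Subtype.ext_iff.mp h; simp [U0, U1] at h
lemma U2_ne_U0 (b j : Fin n) : U2 b j ≠ U0 := by
  intro h; replace h := Subtype.ext_iff.mp h; simp [U0, U2] at h
lemma U2_ne_U1 (b j j' : Fin n) : U2 b j ≠ U1 j' := by
  intro h; replace h := Subtype.ext_iff.mp h; simp [U1, U2] at h
lemma U1_inj {j j' : Fin n} (h : U1 j = U1 j') : j = j' := by
  replace h := Subtype.ext_iff.mp h; simpa [U1] using h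
lemma U2_inj {b j b' j' : Fin n} (h : U2 b j = U2 b' j') : b = b' ∧ j = j' := by
  replace h := Subtype.ext_iff.mp h; simpa [U2] using h

lemma adjU10 (j : Fin n) : (naryTree n 2).Adj (U1 j) U0 := Or.inl ⟨j, rfl⟩
lemma adjU21 (b j : Fin n) : (naryTree n 2).Adj (U2 b j) (U1 j) := Or.inl ⟨b, rfl⟩

lemma nbrU0 {x : naryVertex n 2} (h : (naryTree n 2).Adj U0 x) : ∃ j, x = U1 j := by
  rcases h with ⟨a, ha⟩ | ⟨a, ha⟩
  · exact absurd (congrArg List.length ha) (by simp [U0])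
  · exact ⟨a, vext (by rw [ha]; rfl)⟩

lemma nbrU1 {j : Fin n} {x : naryVertex n 2} (h : (naryTree n 2).Adj (U1 j) x) :
    x = U0 ∨ ∃ b, x = U2 b j := by
  rcases h with ⟨a, ha⟩ | ⟨a, ha⟩
  · left
    apply vext
    have : ([j] : List (Fin n)) = a :: x.1 := ha
    simpa [U0] using (List.cons.injEq _ _ _ _ ▸ this).2.symm
  · exact Or.inr ⟨a, vext (by rw [ha]; rfl)⟩

lemma nbrU2 {b j : Fin n} {x : naryVertex n 2} (h : (naryTree n 2).Adj (U2 b j) x) :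
    x = U1 j := by
  have := adj_full (h := (U2 b j).2) (by simp [U2]) h
  exact vext this

lemma distU10 (j : Fin n) : (naryTree n 2).dist (U1 j) U0 = 1 := dist_adj (adjU10 j)
lemma distU01 (j : Fin n) : (naryTree n 2).dist U0 (U1 j) = 1 := dist_adj (adjU10 j).symm
lemma distU21 (b j : Fin n) : (naryTree n 2).dist (U2 b j) (U1 j) = 1 := dist_adj (adjU21 b j)
lemma distU12 (b j : Fin n) : (naryTree n 2).dist (U1 j) (U2 b j) = 1 :=
  dist_adj (adjU21 b j).symm

lemma distU20 (b j : Fin n) : (naryTree n 2).dist (U2 b j) U0 = 2 := by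
  refine dist_eq_two (U2_ne_U0 b j) ?_ (adjU21 b j) (adjU10 j)
  intro h
  obtain ⟨j', hj'⟩ := nbrU0 h.symm
  exact U2_ne_U1 b j j' hj'

lemma distU02 (b j : Fin n) : (naryTree n 2).dist U0 (U2 b j) = 2 := by
  rw [SimpleGraph.dist_comm]; exact distU20 b j

lemma distU2sib {b b' j : Fin n} (h : b ≠ b') :
    (naryTree n 2).dist (U2 b j) (U2 b' j) = 2 := by
  refine dist_eq_two ?_ (not_adj_of_len (by simp [U2])) (adjU21 b j) (adjU21 b' j).symm
  intro hh; exact h (U2_inj hh).1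

/-- the locating coloring of `T(n,2)` with `n+1` colors -/
def col2 : naryVertex n 2 → ℕ
  | ⟨[], _⟩ => n + 1
  | ⟨[j], _⟩ => j.val + 1
  | ⟨b :: j :: _, _⟩ => phi j b

lemma col2_U0 : col2 (U0 : naryVertex n 2) = n + 1 := rfl
lemma col2_U1 (j : Fin n) : col2 (U1 j) = j.val + 1 := rfl
lemma col2_U2 (b j : Fin n) : col2 (U2 b j) = phi j b := rfl

lemma col2_mem (v : naryVertex n 2) : 1 ≤ col2 v ∧ col2 v ≤ n + 1 := by
  rcases shape2 v with rfl | ⟨j, rfl⟩ | ⟨b, j, rfl⟩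
  · rw [col2_U0]; omega
  · rw [col2_U1]; have := j.isLt; omega
  · rw [col2_U2]; exact ⟨phi_ge j b, phi_le j b⟩

lemma exists_third (hn : 2 ≤ n) (p q : ℕ) :
    ∃ i, 1 ≤ i ∧ i ≤ n + 1 ∧ i ≠ p ∧ i ≠ q := by
  by_cases h1 : p ≠ 1 ∧ q ≠ 1
  · exact ⟨1, by omega⟩
  · by_cases h2 : p ≠ 2 ∧ q ≠ 2
    · exact ⟨2, by omega⟩
    · exact ⟨3, by omega⟩

end Two
end naryAux
namespace naryAux
section TwoCodes
variable {n : ℕ}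

lemma one_le_dist {k : ℕ} {u x : naryVertex n k} (h : u ≠ x) :
    1 ≤ (naryTree n k).dist u x := by
  by_contra hlt
  exact h (dist_eq_zero_iff.mp (by omega))

lemma code2_U0_self : gcode (naryTree n 2) col2 U0 (n + 1) = 0 :=
  gcode_eq ⟨U0, col2_U0, SimpleGraph.dist_self⟩ (fun _ _ => Nat.zero_le _)

lemma code2_U0 {i : ℕ} (h1 : 1 ≤ i) (h2 : i ≤ n) :
    gcode (naryTree n 2) col2 U0 i = 1 := by
  refine gcode_eq ⟨U1 ⟨i - 1, by omega⟩, by rw [col2_U1]; simp; omega, distU01 _⟩ ?_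
  intro x hx
  refine one_le_dist (fun heq => ?_)
  rw [← heq, col2_U0] at hx
  omega

lemma code2_U1_self (j : Fin n) : gcode (naryTree n 2) col2 (U1 j) (j.val + 1) = 0 :=
  gcode_eq ⟨U1 j, col2_U1 j, SimpleGraph.dist_self⟩ (fun _ _ => Nat.zero_le _)

lemma code2_U1 {j : Fin n} {i : ℕ} (h1 : 1 ≤ i) (h2 : i ≤ n + 1) (h3 : i ≠ j.val + 1) :
    gcode (naryTree n 2) col2 (U1 j) i = 1 := by
  obtain ⟨b, hb⟩ := phi_surj j i (by rw [Finset.mem_erase, Finset.mem_Icc]; omega)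
  refine gcode_eq ⟨U2 b j, by rw [col2_U2, hb], distU12 b j⟩ ?_
  intro x hx
  refine one_le_dist (fun heq => ?_)
  rw [← heq, col2_U1] at hx
  exact h3 hx.symm

lemma code2_U2_self (b j : Fin n) : gcode (naryTree n 2) col2 (U2 b j) (phi j b) = 0 :=
  gcode_eq ⟨U2 b j, col2_U2 b j, SimpleGraph.dist_self⟩ (fun _ _ => Nat.zero_le _)

lemma code2_U2_parent (b j : Fin n) :
    gcode (naryTree n 2) col2 (U2 b j) (j.val + 1) = 1 := by
  refine gcode_eq ⟨U1 j, col2_U1 j, distU21 b j⟩ ?_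
  intro x hx
  refine one_le_dist (fun heq => ?_)
  rw [← heq, col2_U2] at hx
  exact phi_ne_parent j b hx

lemma code2_U2_far {b j : Fin n} {i : ℕ} (h1 : 1 ≤ i) (h2 : i ≤ n + 1)
    (h3 : i ≠ phi j b) (h4 : i ≠ j.val + 1) :
    gcode (naryTree n 2) col2 (U2 b j) i = 2 := by
  obtain ⟨b', hb'⟩ := phi_surj j i (by rw [Finset.mem_erase, Finset.mem_Icc]; omega)
  have hbb : b ≠ b' := fun h => h3 (by rw [← hb', h])
  refine gcode_eq ⟨U2 b' j, by rw [col2_U2, hb'], distU2sib hbb⟩ ?_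
  intro x hx
  by_contra hlt
  rcases ball1 (u := U2 b j) (x := x) (by omega) with heq | hadj
  · rw [← heq, col2_U2] at hx; exact h3 hx.symm
  · rw [nbrU2 hadj, col2_U1] at hx; exact h4 hx.symm

lemma code2_unused {i : ℕ} (h : ¬(1 ≤ i ∧ i ≤ n + 1)) (v : naryVertex n 2) :
    gcode (naryTree n 2) col2 v i = 0 :=
  gcode_eq_zero_of_unused (fun x hx => h (hx ▸ col2_mem x))

lemma col2_proper : ∀ u v : naryVertex n 2, (naryTree n 2).Adj u v → col2 u ≠ col2 v := by
  have aux : ∀ u v : naryVertex n 2, (∃ a : Fin n, u.1 = a :: v.1) → col2 u ≠ col2 v := by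
    rintro u v ⟨a, ha⟩
    rcases shape2 v with rfl | ⟨j, rfl⟩ | ⟨b, j, rfl⟩
    · have : u = U1 a := vext ha
      rw [this, col2_U1, col2_U0]
      have := a.isLt; omega
    · have : u = U2 a j := vext ha
      rw [this, col2_U2, col2_U1]
      exact phi_ne_parent j a
    · exfalso
      have := u.2
      rw [ha] at this
      simp [U2] at this
  rintro u v (h | h)
  · exact aux u v h
  · exact (aux v u h).symm

lemma col2_inj (hn : 2 ≤ n) :
    Function.Injective (fun v => fun i : ℕ => gcode (naryTree n 2) col2 v i) := by
  intro u v h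
  have H : ∀ i, gcode (naryTree n 2) col2 u i = gcode (naryTree n 2) col2 v i :=
    fun i => congrFun h i
  rcases shape2 u with rfl | ⟨j, rfl⟩ | ⟨b, j, rfl⟩ <;>
    rcases shape2 v with rfl | ⟨j', rfl⟩ | ⟨b', j', rfl⟩
  · rfl
  · have hj := j'.isLt
    have := H (j'.val + 1)
    rw [code2_U0 (by omega) (by omega), code2_U1_self] at this
    omega
  · obtain ⟨i0, hi1, hi2, hi3, hi4⟩ := exists_third hn (phi j' b') (j'.val + 1)
    have := H i0
    rw [code2_U2_far hi1 hi2 hi3 hi4] at this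
    by_cases hc : i0 = n + 1
    · rw [hc, code2_U0_self] at this; omega
    · rw [code2_U0 hi1 (by omega)] at this; omega
  · have hj := j.isLt
    have := H (j.val + 1)
    rw [code2_U0 (by omega) (by omega), code2_U1_self] at this
    omega
  · by_cases hjj : j = j'
    · rw [hjj]
    · have hne : j.val + 1 ≠ j'.val + 1 := by
        intro h; exact hjj (Fin.ext (by omega))
      have hj := j.isLt
      have := H (j.val + 1)
      rw [code2_U1_self, code2_U1 (by omega) (by omega) hne] at this
      omega
  · obtain ⟨i0, hi1, hi2, hi3, hi4⟩ := exists_third hn (phi j' b') (j'.val + 1)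
    have := H i0
    rw [code2_U2_far hi1 hi2 hi3 hi4] at this
    by_cases hc : i0 = j.val + 1
    · rw [hc, code2_U1_self] at this; omega
    · rw [code2_U1 hi1 hi2 hc] at this; omega
  · obtain ⟨i0, hi1, hi2, hi3, hi4⟩ := exists_third hn (phi j b) (j.val + 1)
    have := H i0
    rw [code2_U2_far hi1 hi2 hi3 hi4] at this
    by_cases hc : i0 = n + 1
    · rw [hc, code2_U0_self] at this; omega
    · rw [code2_U0 hi1 (by omega)] at this; omega
  · obtain ⟨i0, hi1, hi2, hi3, hi4⟩ := exists_third hn (phi j b) (j.val + 1)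
    have := H i0
    rw [code2_U2_far hi1 hi2 hi3 hi4] at this
    by_cases hc : i0 = j'.val + 1
    · rw [hc, code2_U1_self] at this; omega
    · rw [code2_U1 hi1 hi2 hc] at this; omega
  · -- U2 vs U2
    have hphi : phi j b = phi j' b' := by
      by_contra hne
      have := H (phi j b)
      rw [code2_U2_self] at this
      by_cases hp : phi j b = j'.val + 1
      · rw [hp, code2_U2_parent] at this; omega
      · rw [code2_U2_far (phi_ge j b) (phi_le j b) hne hp] at this; omega
    by_cases hjj : j = j'
    · subst hjj
      rw [phi_inj hphi]
    · have hne : j.val + 1 ≠ j'.val + 1 := fun h => hjj (Fin.ext (by omega))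
      have hj := j.isLt
      have := H (j.val + 1)
      have hnp : (j.val + 1) ≠ phi j' b' := by rw [← hphi]; exact (phi_ne_parent j b).symm
      rw [code2_U2_parent, code2_U2_far (by omega) (by omega) hnp hne] at this
      omega

lemma hloc2 (hn : 2 ≤ n) : IsLocatingColoring (naryTree n 2) (n + 1) col2 := by
  refine ⟨fun v => Finset.mem_Icc.mpr (col2_mem v), col2_proper, ?_⟩
  exact col2_inj hn

lemma main2 (hn : 2 ≤ n) : locatingChromaticNumber (naryTree n 2) = n + 1 := by
  unfold locatingChromaticNumber
  refine le_antisymm (Nat.sInf_le ⟨col2, hloc2 hn⟩) ?_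
  refine le_csInf ⟨n + 1, col2, hloc2 hn⟩ ?_
  rintro m ⟨c, hc1, hc2, hc3⟩
  by_contra hlt
  push_neg at hlt
  refine no_locating_k2 hn (fun v => ?_) hc2 hc3
  have := hc1 v
  rw [Finset.mem_Icc] at this ⊢
  omega

end TwoCodes
end naryAux
namespace naryAux
section ThreeCodes
variable {n : ℕ}

lemma distW01 (j : Fin n) : (naryTree n 3).dist W0 (W1 j) = 1 := dist_adj (adjW10 j).symm
lemma distW12 (b j : Fin n) : (naryTree n 3).dist (W1 j) (W2 b j) = 1 :=
  dist_adj (adjW21 b j).symm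
lemma distW23 (a b j : Fin n) : (naryTree n 3).dist (W2 b j) (W3 a b j) = 1 :=
  dist_adj (adjW32 a b j).symm
lemma distW02 (b j : Fin n) : (naryTree n 3).dist W0 (W2 b j) = 2 := by
  rw [SimpleGraph.dist_comm]; exact distW20 b j

/-- the locating coloring of `T(n,3)` with `n+2` colors -/
def col3 : naryVertex n 3 → ℕ
  | ⟨[], _⟩ => n + 2
  | ⟨[j], _⟩ => j.val + 1
  | ⟨[b, j], _⟩ => phi j b
  | ⟨a :: b :: j :: _, _⟩ => theta j b a

lemma col3_W0 : col3 (W0 : naryVertex n 3) = n + 2 := rfl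
lemma col3_W1 (j : Fin n) : col3 (W1 j) = j.val + 1 := rfl
lemma col3_W2 (b j : Fin n) : col3 (W2 b j) = phi j b := rfl
lemma col3_W3 (a b j : Fin n) : col3 (W3 a b j) = theta j b a := rfl

lemma col3_mem (v : naryVertex n 3) : 1 ≤ col3 v ∧ col3 v ≤ n + 2 := by
  rcases shape3 v with rfl | ⟨j, rfl⟩ | ⟨b, j, rfl⟩ | ⟨a, b, j, rfl⟩
  · rw [col3_W0]; omega
  · rw [col3_W1]; have := j.isLt; omega
  · rw [col3_W2]; have := phi_le j b; have := phi_ge j b; omega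
  · rw [col3_W3]; exact ⟨theta_ge j b a, theta_le j b a⟩

lemma code3_W0_self : gcode (naryTree n 3) col3 W0 (n + 2) = 0 :=
  gcode_eq ⟨W0, col3_W0, SimpleGraph.dist_self⟩ (fun _ _ => Nat.zero_le _)

lemma code3_W0_low {i : ℕ} (h1 : 1 ≤ i) (h2 : i ≤ n) :
    gcode (naryTree n 3) col3 W0 i = 1 := by
  refine gcode_eq ⟨W1 ⟨i - 1, by omega⟩, by rw [col3_W1]; simp; omega, distW01 _⟩ ?_
  intro x hx
  refine one_le_dist (fun heq => ?_)
  rw [← heq, col3_W0] at hx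
  omega

lemma code3_W0_n1 (hn : 2 ≤ n) : gcode (naryTree n 3) col3 W0 (n + 1) = 2 := by
  have hlast : phi (⟨n - 1, by omega⟩ : Fin n) (⟨n - 1, by omega⟩ : Fin n) = n + 1 := by
    unfold phi; simp; omega
  refine gcode_eq ⟨W2 ⟨n - 1, by omega⟩ ⟨n - 1, by omega⟩, by rw [col3_W2, hlast], distW02 _ _⟩ ?_
  intro x hx
  by_contra hlt
  rcases ball1 (u := (W0 : naryVertex n 3)) (x := x) (by omega) with heq | hadj
  · rw [← heq, col3_W0] at hx; omega
  · obtain ⟨j', rfl⟩ := nbrW0 hadj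
    rw [col3_W1] at hx
    have := j'.isLt; omega

lemma code3_W1_self (j : Fin n) : gcode (naryTree n 3) col3 (W1 j) (j.val + 1) = 0 :=
  gcode_eq ⟨W1 j, col3_W1 j, SimpleGraph.dist_self⟩ (fun _ _ => Nat.zero_le _)

lemma code3_W1 {j : Fin n} {i : ℕ} (h1 : 1 ≤ i) (h2 : i ≤ n + 2) (h3 : i ≠ j.val + 1) :
    gcode (naryTree n 3) col3 (W1 j) i = 1 := by
  have hmem : ∃ x, col3 x = i ∧ (naryTree n 3).dist (W1 j) x = 1 := by
    by_cases hc : i = n + 2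
    · exact ⟨W0, by rw [col3_W0, hc], distW10 j⟩
    · obtain ⟨b, hb⟩ := phi_surj j i (by rw [Finset.mem_erase, Finset.mem_Icc]; omega)
      exact ⟨W2 b j, by rw [col3_W2, hb], distW12 b j⟩
  refine gcode_eq hmem ?_
  intro x hx
  refine one_le_dist (fun heq => ?_)
  rw [← heq, col3_W1] at hx
  exact h3 hx.symm

lemma code3_W2_self (b j : Fin n) : gcode (naryTree n 3) col3 (W2 b j) (phi j b) = 0 :=
  gcode_eq ⟨W2 b j, col3_W2 b j, SimpleGraph.dist_self⟩ (fun _ _ => Nat.zero_le _)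

lemma code3_W2_chi (b j : Fin n) : gcode (naryTree n 3) col3 (W2 b j) (chi j b) = 2 := by
  have hmem : ∃ x, col3 x = chi j b ∧ (naryTree n 3).dist (W2 b j) x = 2 := by
    rcases chi_spec j b with ⟨hbj, hc⟩ | ⟨hbj, hc⟩
    · exact ⟨W0, by rw [col3_W0, hc], distW20 b j⟩
    · refine ⟨W2 j j, by rw [col3_W2, phi_diag, hc], distW2sib hbj⟩
  refine gcode_eq hmem ?_
  intro x hx
  by_contra hlt
  rcases ball1 (u := W2 b j) (x := x) (by omega) with heq | hadj
  · rw [← heq, col3_W2] at hx; exact chi_ne_phi j b hx.symm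
  · rcases nbrW2 hadj with rfl | ⟨a, rfl⟩
    · rw [col3_W1] at hx; exact chi_ne_parent j b hx.symm
    · rw [col3_W3] at hx; exact theta_ne_chi j b a hx

lemma code3_W2_one {b j : Fin n} {i : ℕ} (h1 : 1 ≤ i) (h2 : i ≤ n + 2)
    (h3 : i ≠ phi j b) (h4 : i ≠ chi j b) :
    gcode (naryTree n 3) col3 (W2 b j) i = 1 := by
  have hmem : ∃ x, col3 x = i ∧ (naryTree n 3).dist (W2 b j) x = 1 := by
    by_cases hc : i = j.val + 1
    · exact ⟨W1 j, by rw [col3_W1, hc], distW21 b j⟩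
    · obtain ⟨a, ha⟩ := theta_surj j b i
        (by rw [Finset.mem_erase, Finset.mem_erase, Finset.mem_Icc]; omega)
      exact ⟨W3 a b j, by rw [col3_W3, ha], distW23 a b j⟩
  refine gcode_eq hmem ?_
  intro x hx
  refine one_le_dist (fun heq => ?_)
  rw [← heq, col3_W2] at hx
  exact h3 hx.symm

lemma code3_W3_self (a b j : Fin n) :
    gcode (naryTree n 3) col3 (W3 a b j) (theta j b a) = 0 :=
  gcode_eq ⟨W3 a b j, col3_W3 a b j, SimpleGraph.dist_self⟩ (fun _ _ => Nat.zero_le _)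

lemma code3_W3_phi (a b j : Fin n) :
    gcode (naryTree n 3) col3 (W3 a b j) (phi j b) = 1 := by
  refine gcode_eq ⟨W2 b j, col3_W2 b j, distW32 a b j⟩ ?_
  intro x hx
  refine one_le_dist (fun heq => ?_)
  rw [← heq, col3_W3] at hx
  exact theta_ne_phi j b a hx

lemma code3_W3_chi (a b j : Fin n) :
    gcode (naryTree n 3) col3 (W3 a b j) (chi j b) = 3 := by
  have hmem : ∃ x, col3 x = chi j b ∧ (naryTree n 3).dist (W3 a b j) x = 3 := by
    rcases chi_spec j b with ⟨hbj, hc⟩ | ⟨hbj, hc⟩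
    · exact ⟨W0, by rw [col3_W0, hc], distW30 a b j⟩
    · exact ⟨W2 j j, by rw [col3_W2, phi_diag, hc], distW3W2 (Ne.symm hbj)⟩
  refine gcode_eq hmem ?_
  intro x hx
  by_contra hlt
  have hle : (naryTree n 3).dist (W3 a b j) x ≤ 2 := by omega
  rcases dist_le_two_cases (preconnected _ _) hle with heq | hadj | ⟨y, hy1, hy2⟩
  · rw [← heq, col3_W3] at hx; exact theta_ne_chi j b a hx
  · rw [nbrW3 hadj, col3_W2] at hx; exact chi_ne_phi j b hx.symm
  · rw [nbrW3 hy1] at hy2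
    rcases nbrW2 hy2 with rfl | ⟨a', rfl⟩
    · rw [col3_W1] at hx; exact chi_ne_parent j b hx.symm
    · rw [col3_W3] at hx; exact theta_ne_chi j b a' hx

lemma code3_W3_two {a b j : Fin n} {i : ℕ} (h1 : 1 ≤ i) (h2 : i ≤ n + 2)
    (h3 : i ≠ theta j b a) (h4 : i ≠ phi j b) (h5 : i ≠ chi j b) :
    gcode (naryTree n 3) col3 (W3 a b j) i = 2 := by
  obtain ⟨a', ha'⟩ := theta_surj j b i
    (by rw [Finset.mem_erase, Finset.mem_erase, Finset.mem_Icc]; omega)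
  have haa : a ≠ a' := fun h => h3 (by rw [← ha', h])
  refine gcode_eq ⟨W3 a' b j, by rw [col3_W3, ha'], distW3sib haa⟩ ?_
  intro x hx
  by_contra hlt
  rcases ball1 (u := W3 a b j) (x := x) (by omega) with heq | hadj
  · rw [← heq, col3_W3] at hx; exact h3 hx.symm
  · rw [nbrW3 hadj, col3_W2] at hx; exact h4 hx.symm

lemma code3_unused {i : ℕ} (h : ¬(1 ≤ i ∧ i ≤ n + 2)) (v : naryVertex n 3) :
    gcode (naryTree n 3) col3 v i = 0 :=
  gcode_eq_zero_of_unused (fun x hx => h (hx ▸ col3_mem x))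

lemma col3_proper : ∀ u v : naryVertex n 3, (naryTree n 3).Adj u v → col3 u ≠ col3 v := by
  have aux : ∀ u v : naryVertex n 3, (∃ a : Fin n, u.1 = a :: v.1) → col3 u ≠ col3 v := by
    rintro u v ⟨a, ha⟩
    rcases shape3 v with rfl | ⟨j, rfl⟩ | ⟨b, j, rfl⟩ | ⟨a', b, j, rfl⟩
    · have : u = W1 a := vext ha
      rw [this, col3_W1, col3_W0]
      have := a.isLt; omega
    · have : u = W2 a j := vext ha
      rw [this, col3_W2, col3_W1]
      exact phi_ne_parent j a
    · have : u = W3 a b j := vext ha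
      rw [this, col3_W3, col3_W2]
      exact theta_ne_phi j b a
    · exfalso
      have := u.2
      rw [ha] at this
      simp [W3] at this
  rintro u v (h | h)
  · exact aux u v h
  · exact (aux v u h).symm

end ThreeCodes
end naryAux
namespace naryAux
section Final
variable {n : ℕ}

lemma col3_inj (hn : 2 ≤ n) :
    Function.Injective (fun v => fun i : ℕ => gcode (naryTree n 3) col3 v i) := by
  intro u v h
  have H : ∀ i, gcode (naryTree n 3) col3 u i = gcode (naryTree n 3) col3 v i :=
    fun i => congrFun h i
  -- evaluation helpers
  have evalW0 : ∀ i, 1 ≤ i → i ≤ n + 2 →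
      gcode (naryTree n 3) col3 (W0 : naryVertex n 3) i = 0 ∨
      gcode (naryTree n 3) col3 (W0 : naryVertex n 3) i = 1 ∨
      gcode (naryTree n 3) col3 (W0 : naryVertex n 3) i = 2 := by
    intro i hi1 hi2
    by_cases hc : i = n + 2
    · rw [hc, code3_W0_self]; tauto
    · by_cases hc' : i = n + 1
      · rw [hc', code3_W0_n1 hn]; tauto
      · rw [code3_W0_low hi1 (by omega)]; tauto
  have evalW1 : ∀ (j : Fin n) i, 1 ≤ i → i ≤ n + 2 →
      gcode (naryTree n 3) col3 (W1 j) i = 0 ∨ gcode (naryTree n 3) col3 (W1 j) i = 1 := by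
    intro j i hi1 hi2
    by_cases hc : i = j.val + 1
    · rw [hc, code3_W1_self]; tauto
    · rw [code3_W1 hi1 hi2 hc]; tauto
  have evalW2 : ∀ (b j : Fin n) i, 1 ≤ i → i ≤ n + 2 →
      gcode (naryTree n 3) col3 (W2 b j) i = 0 ∨ gcode (naryTree n 3) col3 (W2 b j) i = 1 ∨
      gcode (naryTree n 3) col3 (W2 b j) i = 2 := by
    intro b j i hi1 hi2
    by_cases hc : i = phi j b
    · rw [hc, code3_W2_self]; tauto
    · by_cases hc' : i = chi j b
      · rw [hc', code3_W2_chi]; tauto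
      · rw [code3_W2_one hi1 hi2 hc hc']; tauto
  rcases shape3 u with rfl | ⟨j, rfl⟩ | ⟨b, j, rfl⟩ | ⟨a, b, j, rfl⟩ <;>
    rcases shape3 v with rfl | ⟨j', rfl⟩ | ⟨b', j', rfl⟩ | ⟨a', b', j', rfl⟩
  · rfl
  · -- W0 vs W1
    have hj := j'.isLt
    have := H (j'.val + 1)
    rw [code3_W0_low (by omega) (by omega), code3_W1_self] at this
    omega
  · -- W0 vs W2
    have := H (phi j' b')
    rw [code3_W2_self] at this
    rcases evalW0 (phi j' b') (phi_ge j' b') (by have := phi_le j' b'; omega) with h0 | h0 | h0 <;>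
      rw [h0] at this
    · exfalso
      have h1 := phi_le j' b'
      have h2 : phi j' b' = n + 2 := by
        by_contra hc
        by_cases hc' : phi j' b' = n + 1
        · rw [hc', code3_W0_n1 hn] at h0; omega
        · rw [code3_W0_low (phi_ge j' b') (by omega)] at h0; omega
      omega
    · omega
    · omega
  · -- W0 vs W3
    have := H (chi j' b')
    rw [code3_W3_chi] at this
    rcases evalW0 (chi j' b') (chi_ge j' b') (chi_le j' b') with h0 | h0 | h0 <;>
      rw [h0] at this <;> omega
  · -- W1 vs W0
    have hj := j.isLt
    have := H (j.val + 1)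
    rw [code3_W0_low (by omega) (by omega), code3_W1_self] at this
    omega
  · -- W1 vs W1
    by_cases hjj : j = j'
    · rw [hjj]
    · have hne : j.val + 1 ≠ j'.val + 1 := fun hh => hjj (Fin.ext (by omega))
      have hj := j.isLt
      have := H (j.val + 1)
      rw [code3_W1_self, code3_W1 (by omega) (by omega) hne] at this
      omega
  · -- W1 vs W2
    have := H (chi j' b')
    rw [code3_W2_chi] at this
    rcases evalW1 j (chi j' b') (chi_ge j' b') (chi_le j' b') with h0 | h0 <;>
      rw [h0] at this <;> omega
  · -- W1 vs W3
    have := H (chi j' b')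
    rw [code3_W3_chi] at this
    rcases evalW1 j (chi j' b') (chi_ge j' b') (chi_le j' b') with h0 | h0 <;>
      rw [h0] at this <;> omega
  · -- W2 vs W0
    have := H (phi j b)
    rw [code3_W2_self] at this
    rcases evalW0 (phi j b) (phi_ge j b) (by have := phi_le j b; omega) with h0 | h0 | h0 <;>
      rw [h0] at this
    · exfalso
      have h1 := phi_le j b
      have h2 : phi j b = n + 2 := by
        by_contra hc
        by_cases hc' : phi j b = n + 1
        · rw [hc', code3_W0_n1 hn] at h0; omega
        · rw [code3_W0_low (phi_ge j b) (by omega)] at h0; omega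
      omega
    · omega
    · omega
  · -- W2 vs W1
    have := H (chi j b)
    rw [code3_W2_chi] at this
    rcases evalW1 j' (chi j b) (chi_ge j b) (chi_le j b) with h0 | h0 <;>
      rw [h0] at this <;> omega
  · -- W2 vs W2
    have hphi : phi j b = phi j' b' := by
      by_contra hne
      have := H (phi j b)
      rw [code3_W2_self] at this
      by_cases hp : phi j b = chi j' b'
      · rw [hp, code3_W2_chi] at this; omega
      · rw [code3_W2_one (phi_ge j b) (by have := phi_le j b; omega) hne hp] at this; omega
    have hchi : chi j b = chi j' b' := by
      by_contra hne
      have := H (chi j b)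
      rw [code3_W2_chi] at this
      have hnp : chi j b ≠ phi j' b' := by rw [← hphi]; exact chi_ne_phi j b
      rw [code3_W2_one (chi_ge j b) (chi_le j b) hnp hne] at this
      omega
    obtain ⟨rfl, rfl⟩ := phi_chi_inj hphi hchi
    rfl
  · -- W2 vs W3
    have := H (chi j' b')
    rw [code3_W3_chi] at this
    rcases evalW2 b j (chi j' b') (chi_ge j' b') (chi_le j' b') with h0 | h0 | h0 <;>
      rw [h0] at this <;> omega
  · -- W3 vs W0
    have := H (chi j b)
    rw [code3_W3_chi] at this
    rcases evalW0 (chi j b) (chi_ge j b) (chi_le j b) with h0 | h0 | h0 <;>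
      rw [h0] at this <;> omega
  · -- W3 vs W1
    have := H (chi j b)
    rw [code3_W3_chi] at this
    rcases evalW1 j' (chi j b) (chi_ge j b) (chi_le j b) with h0 | h0 <;>
      rw [h0] at this <;> omega
  · -- W3 vs W2
    have := H (chi j b)
    rw [code3_W3_chi] at this
    rcases evalW2 b' j' (chi j b) (chi_ge j b) (chi_le j b) with h0 | h0 | h0 <;>
      rw [h0] at this <;> omega
  · -- W3 vs W3
    have htheta : theta j b a = theta j' b' a' := by
      by_contra hne
      have := H (theta j b a)
      rw [code3_W3_self] at this
      by_cases hp : theta j b a = phi j' b'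
      · rw [hp, code3_W3_phi] at this; omega
      · by_cases hc : theta j b a = chi j' b'
        · rw [hc, code3_W3_chi] at this; omega
        · rw [code3_W3_two (theta_ge j b a) (theta_le j b a) hne hp hc] at this; omega
    have hphi : phi j b = phi j' b' := by
      by_contra hne
      have := H (phi j b)
      rw [code3_W3_phi] at this
      by_cases ht : phi j b = theta j' b' a'
      · rw [ht, code3_W3_self] at this; omega
      · by_cases hc : phi j b = chi j' b'
        · rw [hc, code3_W3_chi] at this; omega
        · rw [code3_W3_two (phi_ge j b) (by have := phi_le j b; omega) ht hne hc] at this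
          omega
    have hchi : chi j b = chi j' b' := by
      by_contra hne
      have := H (chi j b)
      rw [code3_W3_chi] at this
      by_cases ht : chi j b = theta j' b' a'
      · rw [ht, code3_W3_self] at this; omega
      · by_cases hp : chi j b = phi j' b'
        · rw [hp, code3_W3_phi] at this; omega
        · rw [code3_W3_two (chi_ge j b) (chi_le j b) ht hp hne] at this; omega
    obtain ⟨rfl, rfl⟩ := phi_chi_inj hphi hchi
    rw [theta_inj htheta]

lemma hloc3 (hn : 2 ≤ n) : IsLocatingColoring (naryTree n 3) (n + 2) col3 := by
  refine ⟨fun v => Finset.mem_Icc.mpr (col3_mem v), col3_proper, ?_⟩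
  exact col3_inj hn

lemma main3 (hn : 2 ≤ n) : locatingChromaticNumber (naryTree n 3) = n + 2 := by
  unfold locatingChromaticNumber
  refine le_antisymm (Nat.sInf_le ⟨col3, hloc3 hn⟩) ?_
  refine le_csInf ⟨n + 2, col3, hloc3 hn⟩ ?_
  rintro m ⟨c, hc1, hc2, hc3⟩
  by_contra hlt
  push_neg at hlt
  refine no_locating_k3 hn (fun v => ?_) hc2 hc3
  have := hc1 v
  rw [Finset.mem_Icc] at this ⊢
  omega

end Final
end naryAux

/-- For every integer `n ≥ 2` and `k ∈ {2, 3}`, the locating chromatic number of the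
complete `n`-ary tree `T(n,k)` equals `n + k - 1`. -/
theorem locatingChromatic_naryTree_depth_two_three (n k : ℕ) (hn : 2 ≤ n)
    (hk : k = 2 ∨ k = 3) :
    locatingChromaticNumber (naryTree n k) = n + k - 1 := by
  rcases hk with rfl | rfl
  · rw [naryAux.main2 hn]; omega
  · rw [naryAux.main3 hn]; omega
end

section
/- If G is a connected simple graph containing a vertex adjacent to k leaves (vertices of degree 1), then the locating chromatic number of G satisfies χ_L(G) ≥ k + 1. -/
-- leaf distance lemma
lemma leaf_dist {V : Type*} {G : SimpleGraph V} (hG : G.Connected) {x v w : V}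
    (hadj : G.Adj v x) (huniq : ∃! u, G.Adj x u) (hne : w ≠ x) :
    G.dist x w = 1 + G.dist v w := by
  have hle : G.dist x w ≤ 1 + G.dist v w := by
    calc G.dist x w ≤ G.dist x v + G.dist v w := hG.dist_triangle
    _ = 1 + G.dist v w := by rw [SimpleGraph.dist_eq_one_iff_adj.mpr hadj.symm]
  have hr : G.Reachable x w := hG.preconnected x w
  obtain ⟨p, hp⟩ := hr.exists_walk_length_eq_dist
  cases p with
  | nil => exact absurd rfl hne.symm
  | cons h q =>
    obtain ⟨u, _, hu⟩ := huniq
    have h12 : _ = v := (hu _ h).trans (hu _ hadj.symm).symm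
    have := SimpleGraph.Walk.length_cons h q ▸ hp
    have hq : G.dist v w ≤ q.length := h12 ▸ SimpleGraph.dist_le q
    omega

lemma leaf_code {V : Type*} {G : SimpleGraph V} (hG : G.Connected) {x v : V}
    (hadj : G.Adj v x) (huniq : ∃! u, G.Adj x u) {c : V → ℕ} {i : ℕ} (hi : i ≠ c x)
    (hex : ∃ w, c w = i) :
    sInf {d : ℕ | ∃ w, c w = i ∧ G.dist x w = d}
      = 1 + sInf {d : ℕ | ∃ w, c w = i ∧ G.dist v w = d} := by
  have key : ∀ w, c w = i → G.dist x w = 1 + G.dist v w := by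
    intro w hw
    exact leaf_dist hG hadj huniq (fun h => hi (h ▸ hw).symm)
  obtain ⟨w0, hw0⟩ := hex
  have hSv : {d : ℕ | ∃ w, c w = i ∧ G.dist v w = d}.Nonempty := ⟨_, w0, hw0, rfl⟩
  have hSx : {d : ℕ | ∃ w, c w = i ∧ G.dist x w = d}.Nonempty := ⟨_, w0, hw0, rfl⟩
  obtain ⟨w1, hw1, hd1⟩ := Nat.sInf_mem hSv
  obtain ⟨w2, hw2, hd2⟩ := Nat.sInf_mem hSx
  apply le_antisymm
  · exact Nat.sInf_le ⟨w1, hw1, by rw [key w1 hw1, hd1]⟩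
  · have h2 : G.dist x w2 = 1 + G.dist v w2 := key w2 hw2
    have h3 : sInf {d : ℕ | ∃ w, c w = i ∧ G.dist v w = d} ≤ G.dist v w2 :=
      Nat.sInf_le ⟨w2, hw2, rfl⟩
    omega

lemma leaf_inj {V : Type*} {G : SimpleGraph V} (hG : G.Connected) {m : ℕ} {c : V → ℕ}
    (hc : IsLocatingColoring G m c) {v x y : V}
    (hx : G.Adj v x) (hux : ∃! u, G.Adj x u)
    (hy : G.Adj v y) (huy : ∃! u, G.Adj y u) (hcxy : c x = c y) : x = y := by
  apply hc.2.2
  funext i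
  simp only
  by_cases hi : i = c x
  · subst hi
    have m1 : (0:ℕ) ∈ {d : ℕ | ∃ w, c w = c x ∧ G.dist x w = d} :=
      ⟨x, rfl, SimpleGraph.dist_self⟩
    have m2 : (0:ℕ) ∈ {d : ℕ | ∃ w, c w = c x ∧ G.dist y w = d} :=
      ⟨y, hcxy.symm, SimpleGraph.dist_self⟩
    rw [Nat.sInf_eq_zero.mpr (Or.inl m1), Nat.sInf_eq_zero.mpr (Or.inl m2)]
  · by_cases hex : ∃ w, c w = i
    · rw [leaf_code hG hx hux hi hex, leaf_code hG hy huy (hcxy ▸ hi) hex]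
    · have he : ∀ z : V, {d : ℕ | ∃ w, c w = i ∧ G.dist z w = d} = ∅ := by
        intro z
        ext d
        simp only [Set.mem_setOf_eq, Set.mem_empty_iff_false, iff_false]
        rintro ⟨w, hw, -⟩
        exact hex ⟨w, hw⟩
      rw [he x, he y]

lemma exists_locating {V : Type*} [Fintype V] (G : SimpleGraph V) (hG : G.Connected) :
    ∃ m, ∃ c : V → ℕ, IsLocatingColoring G m c := by
  classical
  let e := Fintype.equivFin V
  refine ⟨Fintype.card V, fun w => (e w : ℕ) + 1, ?_, ?_, ?_⟩
  · intro w
    simp only [Finset.mem_Icc]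
    have := (e w).is_lt
    omega
  · intro u w hadj heq
    exact hadj.ne (e.injective (Fin.ext (Nat.succ_injective heq)))
  · intro a b hab
    have key := congrFun hab ((e a : ℕ) + 1)
    simp only at key
    have hinj : ∀ x : V, (e x : ℕ) + 1 = (e a : ℕ) + 1 → x = a := by
      intro x hx
      exact e.injective (Fin.ext (by omega))
    have h1 : sInf {d : ℕ | ∃ x, (e x : ℕ) + 1 = (e a : ℕ) + 1 ∧ G.dist a x = d} = 0 := by
      apply Nat.sInf_eq_zero.mpr
      exact Or.inl ⟨a, rfl, SimpleGraph.dist_self⟩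
    have h2 : {d : ℕ | ∃ x, (e x : ℕ) + 1 = (e a : ℕ) + 1 ∧ G.dist b x = d}
        = {G.dist b a} := by
      ext d
      simp only [Set.mem_setOf_eq, Set.mem_singleton_iff]
      constructor
      · rintro ⟨x, hx, rfl⟩
        rw [hinj x hx]
      · rintro rfl
        exact ⟨a, rfl, rfl⟩
    rw [h1, h2, csInf_singleton] at key
    exact (hG.dist_eq_zero_iff.mp key.symm).symm

/-- If a connected graph `G` contains a vertex adjacent to `k` leaves (vertices of
degree `1`, i.e. with a unique neighbor), then `χ_L(G) ≥ k + 1`. -/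
theorem locatingChromatic_ge_of_leaves {V : Type*} [Fintype V] (G : SimpleGraph V)
    (hG : G.Connected) (k : ℕ) (v : V) (s : Finset V) (hcard : s.card = k)
    (hs : ∀ x ∈ s, G.Adj v x ∧ (∃! w, G.Adj x w)) :
    k + 1 ≤ locatingChromaticNumber G := by
  classical
  have hne : {m | ∃ c : V → ℕ, IsLocatingColoring G m c}.Nonempty := by
    obtain ⟨m, c, hc⟩ := exists_locating G hG
    exact ⟨m, c, hc⟩
  refine le_csInf hne ?_
  rintro m ⟨c, hc⟩
  have hvs : v ∉ s := fun h => G.loopless.irrefl v ((hs v h).1)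
  have hcardi : (insert v s).card = k + 1 := by
    rw [Finset.card_insert_of_notMem hvs, hcard]
  have hmaps : ∀ a ∈ insert v s, c a ∈ Finset.Icc 1 m := fun a _ => hc.1 a
  have hinj : Set.InjOn c (insert v s : Finset V) := by
    intro a ha b hb hab
    simp only [Finset.coe_insert, Set.mem_insert_iff, Finset.mem_coe] at ha hb
    rcases ha with rfl | ha <;> rcases hb with rfl | hb
    · rfl
    · exact absurd hab (hc.2.1 a b (hs b hb).1)
    · exact absurd hab.symm (hc.2.1 b a (hs a ha).1)
    · exact leaf_inj hG hc (hs a ha).1 (hs a ha).2 (hs b hb).1 (hs b hb).2 hab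
  have := Finset.card_le_card_of_injOn c hmaps hinj
  rwa [hcardi, Nat.card_Icc, Nat.add_sub_cancel] at this
end

section
/- For every fixed integer n ≥ 3, χ_L(T(n,k)) = o(k) as k → ∞; that is, the limit as k → ∞ of χ_L(T(n,k)) / k equals 0 (equivalently: for every ε > 0 there is an integer K such that k > K implies χ_L(T(n,k)) / k < ε). -/
namespace LocNary

variable {α : Type*}

/-- length of the longest common prefix of two lists -/
def lcp [DecidableEq α] : List α → List α → ℕ
  | a :: as, b :: bs => if a = b then lcp as bs + 1 else 0
  | _, _ => 0

section basiclcp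
variable [DecidableEq α]

lemma lcp_nil_left (l : List α) : lcp [] l = 0 := by cases l <;> rfl
lemma lcp_nil_right (l : List α) : lcp l [] = 0 := by cases l <;> rfl

lemma lcp_le_left : ∀ a b : List α, lcp a b ≤ a.length
  | [], b => by simp [lcp_nil_left]
  | a :: as, [] => by simp [lcp_nil_right]
  | a :: as, b :: bs => by
      rw [lcp]
      split
      · simpa using lcp_le_left as bs
      · simp

lemma lcp_le_right : ∀ a b : List α, lcp a b ≤ b.length
  | [], b => by simp [lcp_nil_left]
  | a :: as, [] => by simp [lcp_nil_right]
  | a :: as, b :: bs => by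
      rw [lcp]
      split
      · simpa using lcp_le_right as bs
      · simp

lemma lcp_self : ∀ a : List α, lcp a a = a.length
  | [] => rfl
  | a :: as => by rw [lcp]; simp [lcp_self as]

lemma take_lcp_eq : ∀ a b : List α, a.take (lcp a b) = b.take (lcp a b)
  | [], b => by simp [lcp_nil_left]
  | a :: as, [] => by simp [lcp_nil_right]
  | a :: as, b :: bs => by
      rw [lcp]
      split
      · next h => simp [h, take_lcp_eq as bs]
      · simp

lemma le_lcp : ∀ (a b : List α) (s : ℕ), s ≤ a.length → s ≤ b.length →
    a.take s = b.take s → s ≤ lcp a b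
  | _, _, 0, _, _, _ => Nat.zero_le _
  | [], b, s + 1, h, _, _ => by simp at h
  | a :: as, [], s + 1, _, h, _ => by simp at h
  | a :: as, b :: bs, s + 1, h1, h2, h3 => by
      simp only [List.take_succ_cons, List.cons.injEq] at h3
      rw [lcp, if_pos h3.1]
      have := le_lcp as bs s (by simpa using h1) (by simpa using h2) h3.2
      omega

lemma lcp_snoc : ∀ (a c : List α) (x : α),
    lcp a c ≤ lcp (a ++ [x]) c ∧ lcp (a ++ [x]) c ≤ lcp a c + 1 ∧
      (lcp a c < a.length → lcp (a ++ [x]) c = lcp a c)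
  | [], c, x => by
      cases c <;> simp [lcp_nil_left, lcp_nil_right, lcp] <;> split <;> omega
  | a :: as, [], x => by simp [lcp_nil_right]
  | a :: as, b :: bs, x => by
      have IH := lcp_snoc as bs x
      simp only [List.cons_append, lcp]
      split
      · simpa using by omega
      · simp

end basiclcp

/-- the root-side prefix of depth `s` (a suffix of the list) -/
def pre (l : List α) (s : ℕ) : List α := l.drop (l.length - s)

/-- the letter at (1-based) depth `p`, counting from the root -/
def letter (l : List α) (p : ℕ) : Option α := l[l.length - p]?

/-- length of the longest common root-side prefix (list common suffix) -/
def agr [DecidableEq α] (a b : List α) : ℕ := lcp a.reverse b.reverse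

lemma pre_eq_reverse (l : List α) (s : ℕ) :
    pre l s = (l.reverse.take s).reverse := by
  rw [List.reverse_take]
  simp [pre]

lemma length_pre (l : List α) (s : ℕ) (h : s ≤ l.length) :
    (pre l s).length = s := by simp [pre]; omega

lemma pre_suffix (l : List α) (s : ℕ) : pre l s <:+ l := List.drop_suffix _ _

lemma pre_length (l : List α) : pre l l.length = l := by simp [pre]

lemma pre_pre (l : List α) (s s' : ℕ) (h : s' ≤ s) (h2 : s ≤ l.length) :
    pre (pre l s) s' = pre l s' := by
  simp only [pre, List.length_drop, List.drop_drop]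
  congr 1
  omega

lemma pre_append (m w : List α) (s : ℕ) (h : s ≤ w.length) :
    pre (m ++ w) s = pre w s := by
  simp only [pre, List.length_append]
  have : m.length + w.length - s = m.length + (w.length - s) := by omega
  rw [this, List.drop_append]
  simp

lemma pre_of_suffix {m l : List α} (h : m <:+ l) : pre l m.length = m := by
  obtain ⟨w, rfl⟩ := h
  rw [pre_append _ _ _ le_rfl, pre_length]

section agrsec
variable [DecidableEq α]

lemma agr_le_left (a b : List α) : agr a b ≤ a.length := by
  simpa [agr] using lcp_le_left a.reverse b.reverse

lemma agr_le_right (a b : List α) : agr a b ≤ b.length := by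
  simpa [agr] using lcp_le_right a.reverse b.reverse

lemma agr_self (a : List α) : agr a a = a.length := by simpa [agr] using lcp_self a.reverse

lemma agr_nil (a : List α) : agr a [] = 0 := by
  have := agr_le_right a []
  simpa using this

lemma pre_agr (a b : List α) : pre a (agr a b) = pre b (agr a b) := by
  rw [pre_eq_reverse, pre_eq_reverse]
  exact congrArg _ (take_lcp_eq a.reverse b.reverse)

lemma le_agr {a b : List α} {s : ℕ} (h1 : s ≤ a.length) (h2 : s ≤ b.length)
    (h : pre a s = pre b s) : s ≤ agr a b := by
  apply le_lcp a.reverse b.reverse s (by simpa) (by simpa)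
  rw [pre_eq_reverse, pre_eq_reverse] at h
  exact List.reverse_injective h

lemma agr_cons (x : α) (l r : List α) :
    agr l r ≤ agr (x :: l) r ∧ agr (x :: l) r ≤ agr l r + 1 ∧
      (agr l r < l.length → agr (x :: l) r = agr l r) := by
  have h := lcp_snoc l.reverse r.reverse x
  simpa [agr, List.reverse_cons] using h

lemma agr_of_suffix {m a b : List α} (ha : m <:+ a) (hb : m <:+ b) :
    m.length ≤ agr a b :=
  le_agr (ha.length_le) (hb.length_le) (by rw [pre_of_suffix ha, pre_of_suffix hb])

end agrsec

lemma letter_pre (l : List α) (s p : ℕ) (hp : p ≤ s) (hs : s ≤ l.length) :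
    letter (pre l s) p = letter l p := by
  simp only [letter, pre, List.length_drop, List.getElem?_drop]
  congr 1
  omega

lemma letter_eq_of_pre_eq {u v : List α} {s : ℕ} (h : pre u s = pre v s)
    (hsu : s ≤ u.length) (hsv : s ≤ v.length) {p : ℕ} (hp : p ≤ s) :
    letter u p = letter v p := by
  rw [← letter_pre u s p hp hsu, ← letter_pre v s p hp hsv, h]

lemma pre_eq_of_letters {u v : List α} {s : ℕ} (hsu : s ≤ u.length) (hsv : s ≤ v.length)
    (h : ∀ p, 1 ≤ p → p ≤ s → letter u p = letter v p) : pre u s = pre v s := by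
  apply List.ext_getElem?
  intro i
  rcases lt_or_ge i s with hi | hi
  · have h1 : (pre u s)[i]? = letter u (s - i) := by
      simp only [pre, List.getElem?_drop, letter]
      congr 1
      omega
    have h2 : (pre v s)[i]? = letter v (s - i) := by
      simp only [pre, List.getElem?_drop, letter]
      congr 1
      omega
    rw [h1, h2, h (s - i) (by omega) (by omega)]
  · rw [List.getElem?_eq_none, List.getElem?_eq_none]
    · rw [length_pre _ _ hsv]; omega
    · rw [length_pre _ _ hsu]; omega

lemma exists_letter_diff {u v : List α} (hlen : u.length = v.length) (hne : u ≠ v) :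
    ∃ p, 1 ≤ p ∧ p ≤ u.length ∧ letter u p ≠ letter v p := by
  by_contra h
  push_neg at h
  apply hne
  have : pre u u.length = pre v u.length := by
    apply pre_eq_of_letters le_rfl (by omega)
    intro p hp1 hp2
    exact h p hp1 hp2
  rw [pre_length] at this
  rw [this, hlen, pre_length]

lemma head?_pre (l : List α) (p : ℕ) (h1 : 1 ≤ p) (h2 : p ≤ l.length) :
    (pre l p).head? = letter l p := by
  rw [List.head?_eq_getElem?]
  simp [pre, List.getElem?_drop, letter]

section Dist

variable {n k : ℕ}

lemma adj_cons (a : Fin n) (l : List (Fin n)) (h1 : (a :: l).length ≤ k)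
    (h2 : l.length ≤ k) : (naryTree n k).Adj ⟨a :: l, h1⟩ ⟨l, h2⟩ :=
  show (∃ b : Fin n, a :: l = b :: l) ∨ (∃ b : Fin n, l = b :: a :: l) from Or.inl ⟨a, rfl⟩

lemma exists_walk_suffix :
    ∀ (l m : List (Fin n)) (_ : m <:+ l) (h1 : l.length ≤ k) (h2 : m.length ≤ k),
    ∃ w : (naryTree n k).Walk ⟨l, h1⟩ ⟨m, h2⟩, w.length = l.length - m.length := by
  intro l
  induction l with
  | nil =>
      intro m h h1 h2
      have hm : m = [] := List.suffix_nil.mp h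
      subst hm
      exact ⟨SimpleGraph.Walk.nil, (Nat.sub_self _).symm⟩
  | cons a l ih =>
      intro m h h1 h2
      rcases List.suffix_cons_iff.mp h with h' | h'
      · subst h'
        exact ⟨SimpleGraph.Walk.nil, (Nat.sub_self _).symm⟩
      · have hl : l.length ≤ k := by simp at h1; omega
        obtain ⟨w, hw⟩ := ih m h' hl h2
        refine ⟨SimpleGraph.Walk.cons (adj_cons a l h1 hl) w, ?_⟩
        have := h'.length_le
        simp [hw]
        have := SimpleGraph.Walk.length_cons (adj_cons a l h1 hl) w
        omega

lemma dist_le_suffix {l m : List (Fin n)} (h : m <:+ l) (h1 : l.length ≤ k)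
    (h2 : m.length ≤ k) :
    (naryTree n k).dist ⟨l, h1⟩ ⟨m, h2⟩ ≤ l.length - m.length := by
  obtain ⟨w, hw⟩ := exists_walk_suffix l m h h1 h2
  exact hw ▸ SimpleGraph.dist_le w

lemma walk_lb : ∀ (y x : naryVertex n k) (w : (naryTree n k).Walk y x),
      y.1.length + x.1.length ≤ w.length + 2 * agr y.1 x.1 := by
  intro y x w
  induction w with
  | nil => simp [agr_self]; omega
  | @cons p q r h w ih =>
      obtain ⟨a, ha⟩ | ⟨a, ha⟩ :
          (∃ a : Fin n, p.1 = a :: q.1) ∨ (∃ a : Fin n, q.1 = a :: p.1) := h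
      · -- p.1 = a :: q.1
        have hlen : p.1.length = q.1.length + 1 := by rw [ha]; simp
        have hagr := agr_cons a q.1 r.1
        have he : agr p.1 r.1 = agr (a :: q.1) r.1 := by rw [ha]
        change _ ≤ w.length + 1 + _
        omega
      · -- q.1 = a :: p.1
        have hlen : q.1.length = p.1.length + 1 := by rw [ha]; simp
        have hagr := agr_cons a p.1 r.1
        have he : agr q.1 r.1 = agr (a :: p.1) r.1 := by rw [ha]
        change _ ≤ w.length + 1 + _
        omega

lemma reachable (u v : naryVertex n k) : (naryTree n k).Reachable u v := by
  obtain ⟨w1, _⟩ := exists_walk_suffix u.1 [] List.nil_suffix u.2 (Nat.zero_le k)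
  obtain ⟨w2, _⟩ := exists_walk_suffix v.1 [] List.nil_suffix v.2 (Nat.zero_le k)
  exact ⟨w1.append w2.reverse⟩

/-- The distance formula in the `n`-ary tree, in additive form. -/
theorem dist_formula (u v : naryVertex n k) :
    (naryTree n k).dist u v + agr u.1 v.1 + agr u.1 v.1 = u.1.length + v.1.length := by
  set s := agr u.1 v.1 with hs
  have hsu : s ≤ u.1.length := agr_le_left _ _
  have hsv : s ≤ v.1.length := agr_le_right _ _
  have hck : (pre u.1 s).length ≤ k := by
    rw [length_pre _ _ hsu]; exact le_trans hsu u.2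
  have hl : (pre u.1 s).length = s := length_pre _ _ hsu
  have hpre : pre u.1 s = pre v.1 s := pre_agr u.1 v.1
  have h1 : (naryTree n k).dist u ⟨pre u.1 s, hck⟩ ≤ u.1.length - s := by
    have h' := dist_le_suffix (pre_suffix u.1 s) u.2 hck
    rwa [hl] at h'
  have h2 : (naryTree n k).dist v ⟨pre u.1 s, hck⟩ ≤ v.1.length - s := by
    have h' := dist_le_suffix (l := v.1) (m := pre u.1 s) (hpre ▸ pre_suffix v.1 s) v.2 hck
    rwa [hl] at h'
  have h2' : (naryTree n k).dist ⟨pre u.1 s, hck⟩ v ≤ v.1.length - s := by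
    exact SimpleGraph.dist_comm.trans_le h2
  have hub : (naryTree n k).dist u v ≤ (u.1.length - s) + (v.1.length - s) := by
    obtain ⟨w1, hw1⟩ := (reachable u ⟨pre u.1 s, hck⟩).exists_walk_length_eq_dist
    obtain ⟨w2, hw2⟩ :=
      (reachable (⟨pre u.1 s, hck⟩ : naryVertex n k) v).exists_walk_length_eq_dist
    calc (naryTree n k).dist u v ≤ (w1.append w2).length := SimpleGraph.dist_le _
      _ ≤ _ := by have := SimpleGraph.Walk.length_append w1 w2; omega
  have hlb : u.1.length + v.1.length ≤ (naryTree n k).dist u v + 2 * s := by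
    obtain ⟨w, hw⟩ := (reachable u v).exists_walk_length_eq_dist
    have := walk_lb u v w
    omega
  omega

end Dist

section Scheme

variable (n t k : ℕ)

/-- digit-length used for class-index markers -/
def Lk : ℕ := Nat.log 2 k + 1
/-- spacing of the depth-encoding -/
def Dk : ℕ := 2 * Lk k + 4
/-- number of block classes -/
def Bmax : ℕ := k / t
/-- size of the "top window" -/
def Tp : ℕ := t + Dk k * n ^ t + Lk k + 2
/-- modulus for depth residues -/
def Mp : ℕ := 2 * Tp n t k + 2
/-- total number of colors -/
def mTot : ℕ := 1 + Bmax t k + n * Mp n t k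

/-- numeric encoding of a word over `Fin n` -/
def encL : List (Fin n) → ℕ := fun l => l.foldr (fun a r => a.val + n * r) 0

lemma encL_lt : ∀ l : List (Fin n), encL n l < n ^ l.length := by
  intro l
  induction l with
  | nil => simp [encL]
  | cons a l ih =>
      have ha : a.val < n := a.2
      have hn0 : 0 < n := by omega
      simp only [encL, List.foldr_cons, List.length_cons, pow_succ] at *
      calc a.val + n * List.foldr (fun a r => a.val + n * r) 0 l
          ≤ (n - 1) + n * (n ^ l.length - 1) := by
            have : List.foldr (fun (a : Fin n) r => a.val + n * r) 0 l ≤ n ^ l.length - 1 := by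
              omega
            have := Nat.mul_le_mul_left n this
            omega
        _ < n ^ l.length * n := by
            have h1 : 1 ≤ n ^ l.length := Nat.one_le_pow _ _ hn0
            have := Nat.mul_le_mul_left n h1
            rw [Nat.mul_sub]
            rw [Nat.mul_comm (n ^ l.length) n]
            omega

lemma encL_inj : ∀ l1 l2 : List (Fin n), l1.length = l2.length →
    encL n l1 = encL n l2 → l1 = l2 := by
  intro l1
  induction l1 with
  | nil => intro l2 h _; cases l2 <;> simp_all
  | cons a l ih =>
      intro l2 h he
      cases l2 with
      | nil => simp at h
      | cons b l2 =>
          have hn0 : 0 < n := by have := a.2; omega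
          simp only [encL, List.foldr_cons] at he
          have ha : a.val < n := a.2
          have hb : b.val < n := b.2
          have h1 : a.val = b.val := by
            have := congrArg (fun x => x % n) he
            simpa [Nat.add_mul_mod_self_left, Nat.mod_eq_of_lt, ha, hb,
              Nat.mul_comm] using this
          have h2 : encL n l = encL n l2 := by
            have := congrArg (fun x => x / n) he
            simpa [encL, h1, Nat.add_mul_div_left, Nat.mul_comm, hn0,
              Nat.div_eq_of_lt, ha, hb] using this
          have h3 : l = l2 := ih l2 (by simpa using h) h2
          exact by rw [h3, Fin.ext h1]

/-- block `P` of a word: the letters at depths `(P-1)*t + 1, …, P*t`, top down. -/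
def blk (l : List (Fin n)) (P : ℕ) : List (Fin n) := (pre l (P * t)).take t

lemma length_blk (l : List (Fin n)) (P : ℕ) (h1 : 1 ≤ P) (h2 : P * t ≤ l.length) :
    (blk n t l P).length = t := by
  simp only [blk, List.length_take, length_pre _ _ h2]
  have : t ≤ P * t := le_mul_of_one_le_left (Nat.zero_le t) h1 |>.trans_eq (by ring_nf)
  omega

lemma blk_eq_of_pre_eq {u v : List (Fin n)} {s : ℕ} (h : pre u s = pre v s)
    (hsu : s ≤ u.length) (hsv : s ≤ v.length) {P : ℕ} (hP : P * t ≤ s) :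
    blk n t u P = blk n t v P := by
  unfold blk
  rw [← pre_pre u s _ hP hsu, ← pre_pre v s _ hP hsv, h]

lemma letter_eq_of_blk_eq {u v : List (Fin n)} {P p : ℕ}
    (h : blk n t u P = blk n t v P) (hu : P * t ≤ u.length) (hv : P * t ≤ v.length)
    (h1 : (P - 1) * t < p) (h2 : p ≤ P * t) (hP : 1 ≤ P) :
    letter u p = letter v p := by
  have key : ∀ w : List (Fin n), P * t ≤ w.length →
      (blk n t w P)[P * t - p]? = letter w p := by
    intro w hw
    have hptt : (P - 1) * t + t = P * t := by
      cases P with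
      | zero => omega
      | succ P => simp [Nat.succ_sub_one, Nat.succ_mul]
    have hlt : P * t - p < t := by omega
    unfold blk
    rw [List.getElem?_take_of_lt hlt]
    simp only [pre, List.getElem?_drop, letter]
    congr 1
    omega
  rw [← key u hu, ← key v hv, h]

end Scheme

section Marker

variable (n t k : ℕ) (hn : 3 ≤ n)

def bit (b : ℕ) : Fin n := ⟨b % 2, by omega⟩

def bits : ℕ → ℕ → List (Fin n)
  | 0, _ => []
  | i + 1, p => bit n hn p :: bits i (p / 2)

lemma bits_length : ∀ i p, (bits n hn i p).length = i := by
  intro i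
  induction i with
  | zero => intro p; rfl
  | succ i ih => intro p; simp [bits, ih]

lemma bits_inj : ∀ i p q, p < 2 ^ i → q < 2 ^ i → bits n hn i p = bits n hn i q → p = q := by
  intro i
  induction i with
  | zero => intro p q hp hq _; simp at hp hq; omega
  | succ i ih =>
      intro p q hp hq h
      simp only [bits, List.cons.injEq] at h
      have h1 : p % 2 = q % 2 := by
        have := congrArg Fin.val h.1
        simpa [bit] using this
      have h2 : p / 2 = q / 2 := by
        apply ih _ _ (by omega) (by omega) h.2
      omega

def two : Fin n := ⟨2, by omega⟩

def markL (P : ℕ) : List (Fin n) := bits n hn (Lk k) P ++ [two n hn]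

lemma markL_length (P : ℕ) : (markL n k hn P).length = Lk k + 1 := by
  simp [markL, bits_length]

lemma markL_ne_nil (P : ℕ) : markL n k hn P ≠ [] := by
  simp [markL]

lemma markL_inj {P Q : ℕ} (hP : P < 2 ^ Lk k) (hQ : Q < 2 ^ Lk k)
    (h : markL n k hn P = markL n k hn Q) : P = Q := by
  apply bits_inj n hn (Lk k) P Q hP hQ
  exact (List.append_inj h (by simp [bits_length])).1

lemma k_lt_pow : k < 2 ^ Lk k := by
  have := Nat.lt_pow_succ_log_self (b := 2) (by norm_num) k
  simpa [Lk] using this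

/-- `x` is a member of block class `P` -/
def good (x : List (Fin n)) (P : ℕ) : Prop :=
  1 ≤ P ∧ P ≤ Bmax t k ∧ x = markL n k hn P ++ x.drop (Lk k + 1) ∧
    (x.drop (Lk k + 1)).length =
      P * t + Dk k * encL n (blk n t (x.drop (Lk k + 1)) P) + 1

lemma good_unique {x : List (Fin n)} {P Q : ℕ} (hP : good n t k hn x P)
    (hQ : good n t k hn x Q) : P = Q := by
  obtain ⟨hP1, hP2, hP3, _⟩ := hP
  obtain ⟨hQ1, hQ2, hQ3, _⟩ := hQ
  have h : markL n k hn P ++ x.drop (Lk k + 1) = markL n k hn Q ++ x.drop (Lk k + 1) := by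
    rw [← hP3, ← hQ3]
  have := (List.append_inj h (by rw [markL_length, markL_length])).1
  apply markL_inj n k hn _ _ this
  · exact lt_of_le_of_lt (le_trans hP2 (Nat.div_le_self k t)) (k_lt_pow k)
  · exact lt_of_le_of_lt (le_trans hQ2 (Nat.div_le_self k t)) (k_lt_pow k)

lemma good_ne_nil {x : List (Fin n)} {P : ℕ} (h : good n t k hn x P) : x ≠ [] := by
  intro hx
  obtain ⟨_, _, h3, _⟩ := h
  rw [hx] at h3
  have hlen := congrArg List.length h3
  simp [markL_length] at hlen

/-- head value of a word -/
def hval (x : List (Fin n)) : ℕ :=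
  match x.head? with
  | some a => a.val
  | none => 0

lemma hval_lt {x : List (Fin n)} (hx : x ≠ []) (hn' : 0 < n) : hval n x < n := by
  cases x with
  | nil => exact absurd rfl hx
  | cons a l => simpa [hval] using a.2

/-- the color of vertices not in any block class (nor the root) -/
def fcol (x : List (Fin n)) : ℕ :=
  2 + Bmax t k + hval n x * Mp n t k + x.length % Mp n t k

/-- the coloring -/
noncomputable def col (x : List (Fin n)) : ℕ :=
  letI := Classical.dec (∃ P, good n t k hn x P)
  if x = [] then 1
  else if h : ∃ P, good n t k hn x P then 1 + h.choose
  else fcol n t k x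

lemma col_good {x : List (Fin n)} {P : ℕ} (h : good n t k hn x P) :
    col n t k hn x = 1 + P := by
  have hne : x ≠ [] := good_ne_nil n t k hn h
  have hex : ∃ P, good n t k hn x P := ⟨P, h⟩
  rw [col, if_neg hne, dif_pos hex]
  exact congrArg (1 + ·) (good_unique n t k hn hex.choose_spec h)

lemma col_cases (x : List (Fin n)) (hx : x ≠ []) :
    (∃ P, good n t k hn x P ∧ col n t k hn x = 1 + P) ∨
      ((¬ ∃ P, good n t k hn x P) ∧ col n t k hn x = fcol n t k x) := by
  by_cases h : ∃ P, good n t k hn x P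
  · exact Or.inl ⟨h.choose, h.choose_spec, col_good n t k hn h.choose_spec⟩
  · exact Or.inr ⟨h, by rw [col, if_neg hx, dif_neg h]⟩

lemma col_root : col n t k hn [] = 1 := by simp [col]

lemma col_eq_one_iff {x : List (Fin n)} : col n t k hn x = 1 ↔ x = [] := by
  constructor
  · intro h
    by_contra hx
    rcases col_cases n t k hn x hx with ⟨P, hP, hc⟩ | ⟨_, hc⟩
    · rw [hc] at h; have := hP.1; omega
    · rw [hc] at h; unfold fcol at h; omega
  · intro h; rw [h]; exact col_root n t k hn

lemma decomp_unique {M a b ρ σ : ℕ} (hρ : ρ < M) (hσ : σ < M)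
    (h : a * M + ρ = b * M + σ) : a = b ∧ ρ = σ := by
  have h1 : (a * M + ρ) % M = ρ := by
    rw [Nat.mul_comm, Nat.add_comm, Nat.add_mul_mod_self_left, Nat.mod_eq_of_lt hρ]
  have h2 : (b * M + σ) % M = σ := by
    rw [Nat.mul_comm, Nat.add_comm, Nat.add_mul_mod_self_left, Nat.mod_eq_of_lt hσ]
  have hρσ : ρ = σ := by rw [← h1, ← h2, h]
  constructor
  · have : a * M = b * M := by omega
    have hM : 0 < M := by omega
    exact Nat.eq_of_mul_eq_mul_right hM this
  · exact hρσ

lemma col_fcol_char {x : List (Fin n)} {a ρ : ℕ} (ha : a < n) (hρ : ρ < Mp n t k)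
    (h : col n t k hn x = 2 + Bmax t k + a * Mp n t k + ρ) :
    x ≠ [] ∧ hval n x = a ∧ x.length % Mp n t k = ρ := by
  have hx : x ≠ [] := by
    intro hx
    rw [hx, col_root] at h
    omega
  rcases col_cases n t k hn x hx with ⟨P, hP, hc⟩ | ⟨_, hc⟩
  · rw [hc] at h
    have := hP.2.1
    omega
  · rw [hc] at h
    unfold fcol at h
    have h' : hval n x * Mp n t k + x.length % Mp n t k = a * Mp n t k + ρ := by omega
    have := decomp_unique (Nat.mod_lt _ (by unfold Mp; omega)) hρ h'
    exact ⟨hx, this.1, this.2⟩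

end Marker

/-- the color code entry -/
noncomputable def code {n k : ℕ} (c : naryVertex n k → ℕ) (v : naryVertex n k) (i : ℕ) : ℕ :=
  sInf {d : ℕ | ∃ x, c x = i ∧ (naryTree n k).dist v x = d}

section Entry

variable (n t k : ℕ) (hn : 3 ≤ n)

/-- extraction: a color of the form `1 + P` comes from a good vertex -/
lemma col_good_inv {x : List (Fin n)} {P : ℕ} (hP1 : 1 ≤ P) (hP2 : P ≤ Bmax t k)
    (h : col n t k hn x = 1 + P) : good n t k hn x P := by
  have hx : x ≠ [] := by
    intro hx; rw [hx, col_root] at h; omega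
  rcases col_cases n t k hn x hx with ⟨Q, hQ, hc⟩ | ⟨_, hc⟩
  · rw [hc] at h
    have : Q = P := by omega
    rwa [← this]
  · rw [hc] at h
    unfold fcol at h
    omega

/-- the coloring on vertices -/
noncomputable def vcol (v : naryVertex n k) : ℕ := col n t k hn v.1

variable {n t k}

lemma code_eq {c : naryVertex n k → ℕ} {v : naryVertex n k} {i D : ℕ}
    (h1 : ∃ x, c x = i ∧ (naryTree n k).dist v x = D)
    (h2 : ∀ x, c x = i → D ≤ (naryTree n k).dist v x) : code c v i = D := by
  obtain ⟨x, hx, hd⟩ := h1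
  apply le_antisymm
  · exact Nat.sInf_le ⟨x, hx, hd⟩
  · obtain ⟨y, hy, hyd⟩ := Nat.sInf_mem (⟨D, x, hx, hd⟩ :
      Set.Nonempty {d : ℕ | ∃ x, c x = i ∧ (naryTree n k).dist v x = d})
    show D ≤ sInf {d : ℕ | ∃ x, c x = i ∧ (naryTree n k).dist v x = d}
    rw [← hyd]
    exact h2 y hy

lemma code_achieved {c : naryVertex n k → ℕ} {i : ℕ} (v : naryVertex n k)
    (h : ∃ x : naryVertex n k, c x = i) :
    ∃ x, c x = i ∧ (naryTree n k).dist v x = code c v i := by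
  obtain ⟨x, hx⟩ := h
  exact Nat.sInf_mem (⟨(naryTree n k).dist v x, x, hx, rfl⟩ :
    Set.Nonempty {d : ℕ | ∃ x, c x = i ∧ (naryTree n k).dist v x = d})

lemma int_dvd_small {M x : ℤ} (hM : 0 < M) (h : M ∣ x) (h1 : -M < x) (h2 : x < M) :
    x = 0 := by
  obtain ⟨e, rfl⟩ := h
  rcases lt_trichotomy e 0 with he | he | he
  · have : M * e ≤ M * (-1) := by
      apply mul_le_mul_of_nonneg_left (by omega) hM.le
    simp at this
    omega
  · simp [he]
  · have : M * 1 ≤ M * e := by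
      apply mul_le_mul_of_nonneg_left (by omega) hM.le
    simp at this
    omega

/-- the root code entry recovers the depth -/
lemma code_root (v : naryVertex n k) :
    code (vcol n t k hn) v 1 = v.1.length := by
  apply code_eq
  · refine ⟨naryRoot n k, ?_, ?_⟩
    · exact col_root n t k hn
    · have h := dist_formula v (naryRoot n k)
      have : agr v.1 (naryRoot n k).1 = 0 := agr_nil v.1
      rw [this] at h
      simpa [naryRoot] using h
  · intro x hx
    have hx' : x.1 = [] := (col_eq_one_iff n t k hn).mp hx
    have h := dist_formula v x
    have : agr v.1 x.1 = 0 := by rw [hx']; exact agr_nil v.1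
    rw [this, hx'] at h
    simp at h
    omega

/-- mod-M exactness: vertices whose depth is ≡ (depth v - r) mod M are at distance
exactly r only when they are the depth-(|v|-r) ancestor. -/
lemma ft_dist {z x : naryVertex n k} {r : ℕ} (hr : r ≤ Tp n t k) (hrz : r ≤ z.1.length)
    (hmod : x.1.length % Mp n t k = (z.1.length - r) % Mp n t k) :
    r ≤ (naryTree n k).dist z x ∧
      ((naryTree n k).dist z x = r → x.1 = pre z.1 (z.1.length - r)) := by
  set s := agr z.1 x.1 with hs
  have hsz : s ≤ z.1.length := agr_le_left _ _
  have hsx : s ≤ x.1.length := agr_le_right _ _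
  have hdf := dist_formula z x
  set D := (naryTree n k).dist z x with hD
  set M := Mp n t k with hM
  have hM2 : M = 2 * Tp n t k + 2 := rfl
  have hdvd : (M : ℤ) ∣ ((z.1.length - r : ℕ) : ℤ) - (x.1.length : ℤ) := by
    have : (x.1.length : ℕ) ≡ (z.1.length - r) [MOD M] := hmod
    exact (Nat.modEq_iff_dvd.mp this)
  have hcast : ((z.1.length - r : ℕ) : ℤ) = (z.1.length : ℤ) - r := by
    omega
  -- D + 2s = |z| + |x|
  have key : ∀ dd : ℕ, D = dd → dd + s + s = z.1.length + x.1.length → True := fun _ _ _ => trivial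
  constructor
  · by_contra hlt
    push_neg at hlt
    -- D < r
    have hx1 : ((z.1.length : ℤ) - r) - x.1.length = ((z.1.length : ℤ) - s) - r - ((x.1.length : ℤ) - s) := by ring
    have hz1 : (z.1.length : ℤ) - s = ((z.1.length - s : ℕ) : ℤ) := by omega
    have hx2 : (x.1.length : ℤ) - s = ((x.1.length - s : ℕ) : ℤ) := by omega
    have hzero : ((z.1.length : ℤ) - r) - x.1.length = 0 := by
      apply int_dvd_small (by rw [hM2]; omega) (hcast ▸ hdvd)
      · rw [hM2]; omega
      · rw [hM2]; omega
    omega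
  · intro hDr
    have hzero : ((z.1.length : ℤ) - r) - x.1.length = 0 := by
      apply int_dvd_small (by rw [hM2]; omega) (hcast ▸ hdvd)
      · rw [hM2]; omega
      · rw [hM2]; omega
    -- then |x| = |z| - r and s = |x|
    have hxlen : (x.1.length : ℤ) = (z.1.length : ℤ) - r := by omega
    have hsx' : s = x.1.length := by omega
    have : pre z.1 s = pre x.1 s := pre_agr z.1 x.1
    rw [hsx'] at this
    rw [pre_length] at this
    have : x.1 = pre z.1 (z.1.length - r) := by
      rw [← this]
      congr 1
      omega
    exact this

end Entry

section D3

variable (n t k : ℕ) (hn : 3 ≤ n)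

/-- The window lemma for block classes: the code entry at color `1+P` determines
the encoding of block `P` up to a window of width `2L+2`, in disjoint windows. -/
lemma code_D3 (ht : 1 ≤ t) (v : naryVertex n k) (P : ℕ) (hP1 : 1 ≤ P) (hP2 : P ≤ Bmax t k)
    (hcov : P * t + Dk k * (n ^ t - 1) + 1 + (Lk k + 1) ≤ v.1.length) :
    code (vcol n t k hn) v (1 + P) + (P * t + Dk k * encL n (blk n t v.1 P) + 1)
        ≤ v.1.length + Lk k + 1 ∧
      v.1.length + Lk k + 1 ≤ code (vcol n t k hn) v (1 + P)
        + (P * t + Dk k * encL n (blk n t v.1 P) + 1) + (2 * Lk k + 2) := by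
  set j := v.1.length with hj
  set e := encL n (blk n t v.1 P) with he
  set ℓ := P * t + Dk k * e + 1 with hℓ
  have hPtj : P * t ≤ j := by omega
  have hblklen : (blk n t v.1 P).length = t := length_blk n t v.1 P hP1 hPtj
  have helt : e < n ^ t := by
    have := encL_lt n (blk n t v.1 P)
    rwa [hblklen] at this
  have hℓj : ℓ + Lk k + 1 ≤ j := by
    have : Dk k * e + 1 ≤ Dk k * (n ^ t - 1) + 1 := by
      have := Nat.mul_le_mul_left (Dk k) (by omega : e ≤ n ^ t - 1)
      omega
    omega
  have hℓk : (Lk k + 1) + ℓ ≤ k := by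
    have := v.2
    omega
  -- the witness vertex
  have hwlen : (markL n k hn P ++ pre v.1 ℓ).length ≤ k := by
    rw [List.length_append, markL_length, length_pre _ _ (by omega)]
    omega
  set x0 : naryVertex n k := ⟨markL n k hn P ++ pre v.1 ℓ, hwlen⟩ with hx0
  have hdrop : x0.1.drop (Lk k + 1) = pre v.1 ℓ := by
    rw [hx0]
    have : Lk k + 1 = (markL n k hn P).length := (markL_length n k hn P).symm
    rw [this, List.drop_left]
  have hprelen : (pre v.1 ℓ).length = ℓ := length_pre _ _ (by omega)
  have hblkpre : blk n t (pre v.1 ℓ) P = blk n t v.1 P := by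
    unfold blk
    rw [pre_pre v.1 ℓ (P * t) (by omega) (by omega)]
  have hgood : good n t k hn x0.1 P := by
    refine ⟨hP1, hP2, ?_, ?_⟩
    · rw [hdrop]
    · rw [hdrop, hprelen, hblkpre, ← he, ← hℓ]
  have hcx0 : vcol n t k hn x0 = 1 + P := col_good n t k hn hgood
  -- distance to the witness
  have hprew : pre (pre v.1 ℓ) ℓ = pre v.1 ℓ := by
    have h := pre_length (pre v.1 ℓ)
    rwa [hprelen] at h
  have hagrx0 : ℓ ≤ agr v.1 x0.1 := by
    apply le_agr (by omega)
      (by show ℓ ≤ (markL n k hn P ++ pre v.1 ℓ).length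
          rw [List.length_append, markL_length, hprelen]; omega)
    show pre v.1 ℓ = pre (markL n k hn P ++ pre v.1 ℓ) ℓ
    rw [pre_append _ _ _ hprelen.ge, hprew]
  have hx0len : x0.1.length = ℓ + Lk k + 1 := by
    rw [hx0]
    show (markL n k hn P ++ pre v.1 ℓ).length = ℓ + Lk k + 1
    rw [List.length_append, markL_length, hprelen]; omega
  have hagrx0' : agr v.1 x0.1 ≤ ℓ + Lk k + 1 := by
    have h2 := agr_le_right v.1 x0.1
    omega
  have hdfx0 : (naryTree n k).dist v x0 + agr v.1 x0.1 + agr v.1 x0.1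
      = j + (ℓ + Lk k + 1) := by
    have h := dist_formula v x0
    rw [hx0len] at h
    exact h
  have hdle : (naryTree n k).dist v x0 + ℓ ≤ j + Lk k + 1 := by omega
  constructor
  · -- upper bound via the witness
    have : code (vcol n t k hn) v (1 + P) ≤ (naryTree n k).dist v x0 :=
      Nat.sInf_le ⟨x0, hcx0, rfl⟩
    omega
  · -- lower bound over all members
    obtain ⟨y, hy, hyd⟩ := code_achieved v ⟨x0, hcx0⟩
    have hgy : good n t k hn y.1 P := col_good_inv n t k hn hP1 hP2 hy
    obtain ⟨_, _, hy3, hy4⟩ := hgy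
    set w := y.1.drop (Lk k + 1) with hw
    set s := agr v.1 y.1 with hs
    have hsv : s ≤ j := agr_le_left _ _
    have hsy : s ≤ y.1.length := agr_le_right _ _
    have hylen : y.1.length = w.length + (Lk k + 1) := by
      conv_lhs => rw [hy3]
      rw [List.length_append, markL_length]
      omega
    have hwlenP : w.length = P * t + Dk k * encL n (blk n t w P) + 1 := hy4
    have hdfy : (naryTree n k).dist v y + s + s = j + y.1.length := dist_formula v y
    have hprevy : pre v.1 s = pre y.1 s := pre_agr v.1 y.1
    rcases lt_or_ge s (P * t) with hcase | hcase
    · -- s < P*t : far divergence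
      have : P * t + 1 ≤ w.length := by omega
      omega
    · rcases le_or_gt s w.length with hcase2 | hcase2
      · -- P*t ≤ s ≤ |w| : block transfer
        have hprewy : pre y.1 s = pre w s := by
          conv_lhs => rw [hy3]
          rw [pre_append _ _ _ hcase2]
        have hblkw : blk n t w P = blk n t v.1 P :=
          blk_eq_of_pre_eq n t ((hprevy.trans hprewy).symm) hcase2 hsv hcase
        rw [hblkw, ← he] at hwlenP
        omega
      · -- s > |w| : w is an ancestor of v
        have hwv : pre v.1 w.length = w := by
          have h1 : pre v.1 w.length = pre y.1 w.length := by
            rw [← pre_pre v.1 s _ (by omega) hsv, ← pre_pre y.1 s _ (by omega) hsy, hprevy]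
          have h2 : pre y.1 w.length = pre w w.length := by
            conv_lhs => rw [hy3]
            rw [pre_append _ _ _ le_rfl]
          rw [h1, h2, pre_length]
        have hblkw : blk n t w P = blk n t v.1 P := by
          have hwj : w.length ≤ j := by omega
          unfold blk
          rw [← hwv, pre_pre v.1 _ _ (by omega) hwj]
        rw [hblkw, ← he] at hwlenP
        omega

end D3

section Proper

variable (n t k : ℕ) (hn : 3 ≤ n)

lemma pred_mul {P tt : ℕ} (h : 1 ≤ P) : (P - 1) * tt + tt = P * tt := by
  cases P with
  | zero => omega
  | succ P => simp [Nat.succ_sub_one, Nat.succ_mul]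

lemma vcol_proper (u v : naryVertex n k) (h : (naryTree n k).Adj u v) :
    vcol n t k hn u ≠ vcol n t k hn v := by
  have hlen : u.1.length = v.1.length + 1 ∨ v.1.length = u.1.length + 1 := by
    obtain ⟨a, ha⟩ | ⟨a, ha⟩ :
        (∃ a : Fin n, u.1 = a :: v.1) ∨ (∃ a : Fin n, v.1 = a :: u.1) := h
    · left; rw [ha]; rfl
    · right; rw [ha]; rfl
  intro hc
  have hu : u.1 ≠ [] := by
    intro hh
    have h1 : vcol n t k hn u = 1 := by unfold vcol; rw [hh]; exact col_root n t k hn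
    rw [h1] at hc
    have hv' : v.1 = [] := (col_eq_one_iff n t k hn).mp hc.symm
    rw [hh, hv'] at hlen
    simp at hlen
  have hv : v.1 ≠ [] := by
    intro hh
    have h1 : vcol n t k hn v = 1 := by unfold vcol; rw [hh]; exact col_root n t k hn
    rw [h1] at hc
    have hu' : u.1 = [] := (col_eq_one_iff n t k hn).mp hc
    rw [hh, hu'] at hlen
    simp at hlen
  rcases col_cases n t k hn u.1 hu with ⟨P, hP, hcu⟩ | ⟨hnogu, hcu⟩
  · -- u in a block class; then v in the same block class
    have hcv : col n t k hn v.1 = 1 + P := by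
      unfold vcol at hc; rw [← hc, hcu]
    have hgv : good n t k hn v.1 P := col_good_inv n t k hn hP.1 hP.2.1 hcv
    obtain ⟨_, _, hu3, hu4⟩ := hP
    obtain ⟨_, _, hv3, hv4⟩ := hgv
    have hul : u.1.length = (u.1.drop (Lk k + 1)).length + (Lk k + 1) := by
      conv_lhs => rw [hu3]
      rw [List.length_append, markL_length]
      omega
    have hvl : v.1.length = (v.1.drop (Lk k + 1)).length + (Lk k + 1) := by
      conv_lhs => rw [hv3]
      rw [List.length_append, markL_length]
      omega
    have hdvd1 : Dk k ∣ Dk k * encL n (blk n t (u.1.drop (Lk k + 1)) P) :=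
      dvd_mul_right _ _
    have hdvd2 : Dk k ∣ Dk k * encL n (blk n t (v.1.drop (Lk k + 1)) P) :=
      dvd_mul_right _ _
    have hDk : Dk k = 2 * Lk k + 4 := rfl
    have hone : Dk k ∣ 1 := by
      rcases hlen with h1 | h1
      · have hdiff : Dk k * encL n (blk n t (u.1.drop (Lk k + 1)) P)
            = Dk k * encL n (blk n t (v.1.drop (Lk k + 1)) P) + 1 := by omega
        have hd := Nat.dvd_sub hdvd1 hdvd2
        rw [hdiff] at hd
        simpa using hd
      · have hdiff : Dk k * encL n (blk n t (v.1.drop (Lk k + 1)) P)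
            = Dk k * encL n (blk n t (u.1.drop (Lk k + 1)) P) + 1 := by omega
        have hd := Nat.dvd_sub hdvd2 hdvd1
        rw [hdiff] at hd
        simpa using hd
    have := Nat.le_of_dvd one_pos hone
    omega
  · -- u is f-colored, so is v
    have hcv' : col n t k hn v.1 = fcol n t k u.1 := by
      unfold vcol at hc; rw [← hc, hcu]
    have hM2 : 2 ≤ Mp n t k := by unfold Mp; omega
    rcases col_cases n t k hn v.1 hv with ⟨Q, hQ, hcv⟩ | ⟨_, hcv⟩
    · rw [hcv] at hcv'
      unfold fcol at hcv'
      have := hQ.2.1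
      omega
    · rw [hcv] at hcv'
      unfold fcol at hcv'
      have hMum : hval n v.1 * Mp n t k + v.1.length % Mp n t k
          = hval n u.1 * Mp n t k + u.1.length % Mp n t k := by omega
      have hdec := decomp_unique (Nat.mod_lt _ (by omega)) (Nat.mod_lt _ (by omega)) hMum
      have hmod : v.1.length % Mp n t k = u.1.length % Mp n t k := hdec.2
      have hdvd : Mp n t k ∣ 1 := by
        rcases hlen with h3 | h3
        · have hmm : Nat.ModEq (Mp n t k) v.1.length (v.1.length + 1) := by
            unfold Nat.ModEq; rw [← h3]; exact hmod
          have := (Nat.modEq_iff_dvd' (by omega)).mp hmm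
          simpa using this
        · have hmm : Nat.ModEq (Mp n t k) u.1.length (u.1.length + 1) := by
            unfold Nat.ModEq; rw [← h3]; exact hmod.symm
          have := (Nat.modEq_iff_dvd' (by omega)).mp hmm
          simpa using this
      have := Nat.le_of_dvd one_pos hdvd
      omega

lemma vcol_mem (x : naryVertex n k) :
    vcol n t k hn x ∈ Finset.Icc 1 (mTot n t k) := by
  rw [Finset.mem_Icc]
  have hm : mTot n t k = 1 + Bmax t k + n * Mp n t k := rfl
  by_cases hx : x.1 = []
  · have h1 : vcol n t k hn x = 1 := by unfold vcol; rw [hx]; exact col_root n t k hn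
    rw [h1]
    omega
  · rcases col_cases n t k hn x.1 hx with ⟨P, hP, hcx⟩ | ⟨_, hcx⟩
    · have := hP.1
      have := hP.2.1
      unfold vcol
      rw [hcx]
      omega
    · unfold vcol
      rw [hcx]
      unfold fcol
      have h1 : hval n x.1 < n := hval_lt n hx (by omega)
      have h2 : x.1.length % Mp n t k < Mp n t k := Nat.mod_lt _ (by unfold Mp; omega)
      have h3 : hval n x.1 * Mp n t k ≤ (n - 1) * Mp n t k :=
        Nat.mul_le_mul_right _ (by omega)
      have h4 : (n - 1) * Mp n t k + Mp n t k = n * Mp n t k :=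
        pred_mul (by omega)
      omega

end Proper

section Inj

variable (n t k : ℕ) (hn : 3 ≤ n)

/-- distance to an ancestor -/
lemma dist_pre (v : naryVertex n k) (q : ℕ) (hq : q ≤ v.1.length)
    (hk : (pre v.1 q).length ≤ k) :
    (naryTree n k).dist v ⟨pre v.1 q, hk⟩ + q = v.1.length := by
  have hlen : (pre v.1 q).length = q := length_pre _ _ hq
  have hd : (naryTree n k).dist v ⟨pre v.1 q, hk⟩ + agr v.1 (pre v.1 q)
      + agr v.1 (pre v.1 q) = v.1.length + q := by
    have hh := dist_formula v ⟨pre v.1 q, hk⟩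
    rw [show ((⟨pre v.1 q, hk⟩ : naryVertex n k)).1 = pre v.1 q from rfl, hlen] at hh
    exact hh
  have hge : q ≤ agr v.1 (pre v.1 q) := by
    apply le_agr hq (by omega)
    have hpp := pre_length (pre v.1 q)
    rw [hlen] at hpp
    exact hpp.symm
  have hle : agr v.1 (pre v.1 q) ≤ q := by
    have := agr_le_right v.1 (pre v.1 q)
    omega
  omega

lemma hval_pre (l : List (Fin n)) (p : ℕ) (h1 : 1 ≤ p) (h2 : p ≤ l.length) :
    ∃ aa : Fin n, letter l p = some aa ∧ hval n (pre l p) = aa.val := by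
  have hh := head?_pre l p h1 h2
  have hlt : l.length - p < l.length := by omega
  have hsome : l[l.length - p]? = some (l.get ⟨l.length - p, hlt⟩) := by
    rw [List.getElem?_eq_getElem hlt]
    rfl
  refine ⟨l.get ⟨l.length - p, hlt⟩, ?_, ?_⟩
  · rw [letter, hsome]
  · unfold hval
    rw [hh]
    rw [letter, hsome]

/-- The injectivity of the color code -/
theorem vcol_inj (ht : 1 ≤ t) :
    Function.Injective
      (fun v : naryVertex n k => fun i : ℕ => code (vcol n t k hn) v i) := by
  intro u v h
  have hcode : ∀ i, code (vcol n t k hn) u i = code (vcol n t k hn) v i :=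
    fun i => congrFun h i
  have hj : u.1.length = v.1.length := by
    rw [← code_root hn u, ← code_root hn v, hcode 1]
  set j := v.1.length with hjj
  by_contra hne
  have hne' : u.1 ≠ v.1 := fun hh => hne (Subtype.ext hh)
  have hSne : ∃ p, 1 ≤ p ∧ p ≤ j ∧ letter u.1 p ≠ letter v.1 p := by
    obtain ⟨p, hp1, hp2, hp3⟩ := exists_letter_diff hj hne'
    exact ⟨p, hp1, by omega, hp3⟩
  classical
  have hExq : ∃ q, (1 ≤ q ∧ q ≤ j ∧ letter u.1 q ≠ letter v.1 q) ∧
      ∀ p, p < q → ¬(1 ≤ p ∧ p ≤ j ∧ letter u.1 p ≠ letter v.1 p) :=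
    ⟨Nat.find hSne, Nat.find_spec hSne, fun p hp => Nat.find_min hSne hp⟩
  obtain ⟨q, hqspec, hqmin⟩ := hExq
  obtain ⟨hq1, hqj, hqd⟩ := hqspec
  have hmin : ∀ p, p < q → 1 ≤ p → p ≤ j → letter u.1 p = letter v.1 p := by
    intro p hp hp1 hpj
    by_contra hpd
    exact hqmin p hp ⟨hp1, hpj, hpd⟩
  have hpre : pre u.1 (q - 1) = pre v.1 (q - 1) := by
    apply pre_eq_of_letters (by omega) (by omega)
    intro p hp1 hp2
    exact hmin p (by omega) hp1 (by omega)
  have hTp : Tp n t k = t + Dk k * n ^ t + Lk k + 2 := rfl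
  have hDk : Dk k = 2 * Lk k + 4 := rfl
  have hLk1 : 1 ≤ Lk k := by unfold Lk; omega
  rcases le_or_gt (q + Tp n t k) j with hcaseA | hcaseB
  · -- Case A: deep difference, caught by a block class
    have hexP : ∃ P rr, t * P + rr = q + t - 1 ∧ rr < t ∧ P = (q + t - 1) / t :=
      ⟨(q + t - 1) / t, (q + t - 1) % t, Nat.div_add_mod _ _, Nat.mod_lt _ (by omega), rfl⟩
    obtain ⟨P, rr, hdm, hmlt, hPdef⟩ := hexP
    have hcomm : t * P = P * t := Nat.mul_comm t P
    have hPt1 : q ≤ P * t := by omega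
    have hPt2 : P * t ≤ q + t - 1 := by omega
    have hP1 : 1 ≤ P := by
      rcases Nat.eq_zero_or_pos P with h0 | h1
      · rw [h0] at hdm
        simp at hdm
        omega
      · exact h1
    have hP2 : P ≤ Bmax t k := by
      rw [show Bmax t k = k / t from rfl, Nat.le_div_iff_mul_le (by omega)]
      have := v.2
      omega
    have hPtm1 : (P - 1) * t < q := by
      have := pred_mul (tt := t) hP1
      omega
    have hPtj : P * t ≤ j := by omega
    have hble : blk n t u.1 P = blk n t v.1 P → False := by
      intro hbl
      exact hqd (letter_eq_of_blk_eq n t hbl (by omega) (by omega) hPtm1 hPt1 hP1)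
    have hene : encL n (blk n t u.1 P) ≠ encL n (blk n t v.1 P) := by
      intro he
      apply hble
      apply encL_inj n _ _ _ he
      rw [length_blk n t u.1 P hP1 (by omega), length_blk n t v.1 P hP1 (by omega)]
    have hDblle : Dk k * (n ^ t - 1) + Dk k = Dk k * n ^ t := by
      have hnt1 : 1 ≤ n ^ t := Nat.one_le_pow _ _ (by omega)
      have h3 := Nat.mul_le_mul_left (Dk k) hnt1
      rw [Nat.mul_one] at h3
      rw [Nat.mul_sub, Nat.mul_one]
      omega
    have htest1 : q + t - 1 + 1 = q + t := by omega
    have htest2 : P * t ≤ q + t - 1 := hPt2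
    have htest3 : q + Tp n t k ≤ j := hcaseA
    have hcov_u : P * t + Dk k * (n ^ t - 1) + 1 + (Lk k + 1) ≤ u.1.length := by omega
    have hcov_v : P * t + Dk k * (n ^ t - 1) + 1 + (Lk k + 1) ≤ v.1.length := by omega
    obtain ⟨hup1, hup2⟩ := code_D3 n t k hn ht u P hP1 hP2 hcov_u
    obtain ⟨hvp1, hvp2⟩ := code_D3 n t k hn ht v P hP1 hP2 hcov_v
    have hc := hcode (1 + P)
    set Eu := encL n (blk n t u.1 P) with hEu
    set Ev := encL n (blk n t v.1 P) with hEv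
    rcases lt_trichotomy Eu Ev with hlt | heq | hlt
    · have h1 : Dk k * (Eu + 1) ≤ Dk k * Ev := Nat.mul_le_mul_left _ (by omega)
      have h2 : Dk k * (Eu + 1) = Dk k * Eu + Dk k := Nat.mul_succ _ _
      omega
    · exact hene heq
    · have h1 : Dk k * (Ev + 1) ≤ Dk k * Eu := Nat.mul_le_mul_left _ (by omega)
      have h2 : Dk k * (Ev + 1) = Dk k * Ev + Dk k := Nat.mul_succ _ _
      omega
  · -- Case B: difference near the top
    set r := j - q with hr
    have hrT : r ≤ Tp n t k := by omega
    have hqk : q ≤ k := le_trans hqj v.2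
    have hprevk : (pre v.1 q).length ≤ k := by rw [length_pre _ _ hqj]; exact hqk
    have hpreuk : (pre u.1 q).length ≤ k := by rw [length_pre _ _ (by omega)]; exact hqk
    have hancne : pre v.1 q ≠ [] := by
      intro hh
      have := length_pre v.1 q hqj
      rw [hh] at this
      simp at this
      omega
    have hdvanc : (naryTree n k).dist v ⟨pre v.1 q, hprevk⟩ = r :=
      by have := dist_pre n k v q hqj hprevk; omega
    have hprequ : pre u.1 q = pre u.1 q := rfl
    -- the two prefixes at level q differ
    have hprene : pre u.1 q ≠ pre v.1 q := by
      intro hh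
      exact hqd (letter_eq_of_pre_eq hh (by omega) hqj le_rfl)
    rcases col_cases n t k hn (pre v.1 q) hancne with ⟨Pv, hPv, hcolv⟩ | ⟨hnog, hcolv⟩
    · -- v's ancestor is in a block class
      obtain ⟨hPv1, hPv2, hPv3, hPv4⟩ := hPv
      set w0 := (pre v.1 q).drop (Lk k + 1) with hw0
      have hq0len : (pre v.1 q).length = q := length_pre _ _ hqj
      have hw0len : w0.length + (Lk k + 1) = q := by
        have h1 : (pre v.1 q).length = (markL n k hn Pv ++ w0).length := by
          conv_lhs => rw [hPv3]
        rw [List.length_append, markL_length] at h1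
        omega
      have hqL : Lk k + 1 < q := by
        have h5 : 1 ≤ w0.length := by
          have := hPv4
          omega
        omega
      have hw0pre : w0 = pre v.1 (q - (Lk k + 1)) := by
        rw [hw0]
        show List.drop (Lk k + 1) (pre v.1 q) = pre v.1 (q - (Lk k + 1))
        simp only [pre, List.drop_drop]
        congr 1
        omega
      have hw0preu : w0 = pre u.1 (q - (Lk k + 1)) := by
        rw [hw0pre, ← pre_pre v.1 (q-1) _ (by omega) (by omega),
          ← pre_pre u.1 (q-1) _ (by omega) (by omega), hpre]
      have hPvt : Pv * t + 1 ≤ w0.length := by omega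
      have hPvtq : Pv * t ≤ q - (Lk k + 1) := by omega
      -- block Pv is common to u, v, w0
      have hblkw0v : blk n t w0 Pv = blk n t v.1 Pv := by
        rw [hw0pre]
        unfold blk
        rw [pre_pre v.1 _ _ (by omega) (by omega)]
      have hblkw0u : blk n t w0 Pv = blk n t u.1 Pv := by
        rw [hw0preu]
        unfold blk
        rw [pre_pre u.1 _ _ (by omega) (by omega)]
      set i := 1 + Pv with hi
      have hcolanc : vcol n t k hn ⟨pre v.1 q, hprevk⟩ = i := hcolv
      -- code v i = r
      have hcv : code (vcol n t k hn) v i = r := by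
        apply code_eq ⟨⟨pre v.1 q, hprevk⟩, hcolanc, hdvanc⟩
        intro x hx
        have hgx : good n t k hn x.1 Pv := col_good_inv n t k hn hPv1 hPv2 hx
        obtain ⟨_, _, hx3, hx4⟩ := hgx
        set w := x.1.drop (Lk k + 1) with hw
        set s := agr v.1 x.1 with hs
        have hsv : s ≤ j := agr_le_left _ _
        have hsx : s ≤ x.1.length := agr_le_right _ _
        have hxlen : x.1.length = w.length + (Lk k + 1) := by
          conv_lhs => rw [hx3]
          rw [List.length_append, markL_length]
          omega
        have hdfx : (naryTree n k).dist v x + s + s = j + x.1.length := dist_formula v x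
        have hprevx : pre v.1 s = pre x.1 s := pre_agr v.1 x.1
        rcases lt_or_ge s (Pv * t) with hcc | hcc
        · omega
        · rcases le_or_gt s w.length with hcc2 | hcc2
          · have hprewx : pre x.1 s = pre w s := by
              conv_lhs => rw [hx3]
              rw [pre_append _ _ _ hcc2]
            have hblkw : blk n t w Pv = blk n t v.1 Pv :=
              blk_eq_of_pre_eq n t ((hprevx.trans hprewx).symm) hcc2 hsv hcc
            rw [hblkw, ← hblkw0v] at hx4
            omega
          · have hwx : pre v.1 w.length = w := by
              have h1 : pre v.1 w.length = pre x.1 w.length := by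
                rw [← pre_pre v.1 s _ (by omega) hsv, ← pre_pre x.1 s _ (by omega) hsx,
                  hprevx]
              have h2 : pre x.1 w.length = pre w w.length := by
                conv_lhs => rw [hx3]
                rw [pre_append _ _ _ le_rfl]
              rw [h1, h2, pre_length]
            have hblkw : blk n t w Pv = blk n t v.1 Pv := by
              unfold blk
              rw [← hwx, pre_pre v.1 _ _ (by omega) (by omega)]
            rw [hblkw, ← hblkw0v] at hx4
            omega
      -- code u i = r leads to a contradiction
      have hcu : code (vcol n t k hn) u i = r := by rw [hcode i]; exact hcv
      obtain ⟨x, hx, hxd⟩ := code_achieved u ⟨⟨pre v.1 q, hprevk⟩, hcolanc⟩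
      rw [hcu] at hxd
      have hgx : good n t k hn x.1 Pv := col_good_inv n t k hn hPv1 hPv2 hx
      obtain ⟨_, _, hx3, hx4⟩ := hgx
      set w := x.1.drop (Lk k + 1) with hw
      set s := agr u.1 x.1 with hs
      have hsu : s ≤ j := by have := agr_le_left u.1 x.1; omega
      have hsx : s ≤ x.1.length := agr_le_right _ _
      have hxlen : x.1.length = w.length + (Lk k + 1) := by
        conv_lhs => rw [hx3]
        rw [List.length_append, markL_length]
        omega
      have hdfx : (naryTree n k).dist u x + s + s = u.1.length + x.1.length :=
        dist_formula u x
      have hpreux : pre u.1 s = pre x.1 s := pre_agr u.1 x.1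
      rcases lt_or_ge s (Pv * t) with hcc | hcc
      · omega
      · rcases le_or_gt s w.length with hcc2 | hcc2
        · have hprewx : pre x.1 s = pre w s := by
            conv_lhs => rw [hx3]
            rw [pre_append _ _ _ hcc2]
          have hblkw : blk n t w Pv = blk n t u.1 Pv :=
            blk_eq_of_pre_eq n t ((hpreux.trans hprewx).symm) hcc2 (by omega) hcc
          rw [hblkw, ← hblkw0u] at hx4
          omega
        · have hwx : pre u.1 w.length = w := by
            have h1 : pre u.1 w.length = pre x.1 w.length := by
              rw [← pre_pre u.1 s _ (by omega) (by omega), ← pre_pre x.1 s _ (by omega) hsx,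
                hpreux]
            have h2 : pre x.1 w.length = pre w w.length := by
              conv_lhs => rw [hx3]
              rw [pre_append _ _ _ le_rfl]
            rw [h1, h2, pre_length]
          have hblkw : blk n t w Pv = blk n t u.1 Pv := by
            unfold blk
            rw [← hwx, pre_pre u.1 _ _ (by omega) (by omega)]
          rw [hblkw, ← hblkw0u] at hx4
          -- now |w| = q - (L+1), |x| = q, and dist = r forces s = q
          have hsq : s = q := by omega
          have hxval : x.1 = pre u.1 q := by
            have h1 : pre u.1 s = pre x.1 s := hpreux
            rw [hsq] at h1
            have h2 : pre x.1 q = x.1 := by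
              have := pre_length x.1
              rw [show x.1.length = q by omega] at this
              exact this
            rw [h2] at h1
            exact h1.symm
          have hdropu : (pre u.1 q).drop (Lk k + 1) = pre u.1 (q - (Lk k + 1)) := by
            simp only [pre, List.drop_drop]
            congr 1
            omega
          have hwW0 : w = w0 := by
            rw [hw, hxval, hdropu, hw0preu]
          -- but then pre u q = markL Pv ++ w0 = pre v q, contradiction
          apply hprene
          rw [← hxval, hx3, hPv3, hwW0]
    · -- v's ancestor is f-colored
      obtain ⟨av, hlav, hhav⟩ := hval_pre n v.1 q hq1 hqj
      have hq0len : (pre v.1 q).length = q := length_pre _ _ hqj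
      set a := hval n (pre v.1 q) with ha
      have halt : a < n := hval_lt n hancne (by omega)
      have hMpos : 0 < Mp n t k := by unfold Mp; omega
      have hqM : q % Mp n t k < Mp n t k := Nat.mod_lt _ hMpos
      set i := 2 + Bmax t k + a * Mp n t k + q % Mp n t k with hi
      have hcolanc : vcol n t k hn ⟨pre v.1 q, hprevk⟩ = i := by
        show col n t k hn (pre v.1 q) = i
        rw [hcolv]
        unfold fcol
        rw [hq0len]
      -- code v i = r
      have hcv : code (vcol n t k hn) v i = r := by
        apply code_eq ⟨⟨pre v.1 q, hprevk⟩, hcolanc, hdvanc⟩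
        intro x hx
        obtain ⟨hxne, hxhv, hxmod⟩ := col_fcol_char n t k hn halt hqM hx
        have hmod : x.1.length % Mp n t k = (v.1.length - r) % Mp n t k := by
          rw [show v.1.length - r = q by omega]
          exact hxmod
        exact (ft_dist hrT (by omega) hmod).1
      have hcu : code (vcol n t k hn) u i = r := by rw [hcode i]; exact hcv
      obtain ⟨x, hx, hxd⟩ := code_achieved u ⟨⟨pre v.1 q, hprevk⟩, hcolanc⟩
      rw [hcu] at hxd
      obtain ⟨hxne, hxhv, hxmod⟩ := col_fcol_char n t k hn halt hqM hx
      have hmod : x.1.length % Mp n t k = (u.1.length - r) % Mp n t k := by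
        rw [show u.1.length - r = q by omega]
        exact hxmod
      have hft := ft_dist hrT (by omega : r ≤ u.1.length) hmod
      have hxval : x.1 = pre u.1 q := by
        have := hft.2 hxd
        rw [show u.1.length - r = q by omega] at this
        exact this
      obtain ⟨au, hlau, hhau⟩ := hval_pre n u.1 q hq1 (by omega)
      rw [hxval, hhau] at hxhv
      have hauv : au = av := Fin.val_injective (by rw [hxhv]; exact hhav)
      apply hqd
      rw [hlau, hlav, hauv]
end Inj

section Final

/-- the constructed coloring is a locating coloring -/
theorem isLocating (n t k : ℕ) (hn : 3 ≤ n) (ht : 1 ≤ t) :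
    IsLocatingColoring (naryTree n k) (mTot n t k) (vcol n t k hn) := by
  refine ⟨fun v => vcol_mem n t k hn v, fun u v h => vcol_proper n t k hn u v h, ?_⟩
  exact vcol_inj n t k hn ht

theorem chi_le (n t k : ℕ) (hn : 3 ≤ n) (ht : 1 ≤ t) :
    locatingChromaticNumber (naryTree n k) ≤ mTot n t k :=
  Nat.sInf_le ⟨vcol n t k hn, isLocating n t k hn ht⟩

lemma sq_le_pow : ∀ s : ℕ, 6 ≤ s → (s + 1) * (s + 1) ≤ 2 ^ s := by
  intro s hs
  induction s, hs using Nat.le_induction with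
  | base => norm_num
  | succ s hs ih =>
      rw [pow_succ]
      nlinarith [ih, hs]

lemma log_le_sqrt (k : ℕ) (h : 36 ≤ k) : Lk k ≤ Nat.sqrt k := by
  have hs : 6 ≤ Nat.sqrt k := Nat.le_sqrt.mpr (by omega)
  have h1 : k < (Nat.sqrt k + 1) * (Nat.sqrt k + 1) := Nat.lt_succ_sqrt k
  have h2 := sq_le_pow (Nat.sqrt k) hs
  have h3 : k < 2 ^ Nat.sqrt k := lt_of_lt_of_le h1 h2
  have h4 : Nat.log 2 k < Nat.sqrt k := Nat.log_lt_of_lt_pow (by omega) h3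
  unfold Lk
  omega

/-- the constant in the color bound -/
def CC (n t : ℕ) : ℕ := n * (2 * t + 12 * n ^ t + 8) + 1

lemma mTot_le (n t k : ℕ) (hn : 3 ≤ n) (hk : 36 ≤ k) :
    mTot n t k ≤ k / t + CC n t * Nat.sqrt k := by
  have hlam1 : 1 ≤ Lk k := by unfold Lk; omega
  set A := n ^ t with hA
  set lam := Lk k with hlam
  have hM : Mp n t k = 2 * t + (4 * lam + 8) * A + 2 * lam + 6 := by
    show 2 * (t + (2 * lam + 4) * A + lam + 2) + 2 = _
    ring
  have h1 : t ≤ lam * t := Nat.le_mul_of_pos_left t (by omega)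
  have h2 : A ≤ lam * A := Nat.le_mul_of_pos_left A (by omega)
  have h3 : (4 * lam + 8) * A = 4 * (lam * A) + 8 * A := by ring
  have hMle : Mp n t k ≤ lam * (2 * t + 12 * A + 8) := by
    have hexp : lam * (2 * t + 12 * A + 8) = 2 * (lam * t) + 12 * (lam * A) + 8 * lam := by
      ring
    omega
  have h4 : n * Mp n t k ≤ n * (lam * (2 * t + 12 * A + 8)) :=
    Nat.mul_le_mul_left n hMle
  have h5 : n * (lam * (2 * t + 12 * A + 8)) = lam * (n * (2 * t + 12 * A + 8)) := by
    ring
  have h6 : lam * CC n t = lam * (n * (2 * t + 12 * A + 8)) + lam := by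
    show lam * (n * (2 * t + 12 * n ^ t + 8) + 1) = _
    rw [← hA]
    ring
  have h7 : mTot n t k = 1 + k / t + n * Mp n t k := rfl
  have h8 : lam ≤ Nat.sqrt k := log_le_sqrt k hk
  have h9 : lam * CC n t ≤ Nat.sqrt k * CC n t := Nat.mul_le_mul_right _ h8
  have h10 : Nat.sqrt k * CC n t = CC n t * Nat.sqrt k := Nat.mul_comm _ _
  omega

lemma chi_le2 (n t k : ℕ) (hn : 3 ≤ n) (ht : 1 ≤ t) (hk : 36 ≤ k)
    (hk2 : (t * CC n t) * (t * CC n t) ≤ k) :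
    locatingChromaticNumber (naryTree n k) ≤ 2 * (k / t) := by
  have h1 := chi_le n t k hn ht
  have h2 := mTot_le n t k hn hk
  have h3 : CC n t * Nat.sqrt k ≤ k / t := by
    rw [Nat.le_div_iff_mul_le (by omega)]
    have h4 : t * CC n t ≤ Nat.sqrt k := Nat.le_sqrt.mpr hk2
    have h5 : CC n t * Nat.sqrt k * t = (t * CC n t) * Nat.sqrt k := by ring
    have h6 : Nat.sqrt k * Nat.sqrt k ≤ k := by
      have := Nat.sqrt_le' k
      rwa [pow_two] at this
    rw [h5]
    calc (t * CC n t) * Nat.sqrt k ≤ Nat.sqrt k * Nat.sqrt k :=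
          Nat.mul_le_mul_right _ h4
      _ ≤ k := h6
  omega

end Final

end LocNary

/-- For every fixed integer `n ≥ 3`, `χ_L(T(n,k)) = o(k)` as `k → ∞`; that is,
`χ_L(T(n,k)) / k → 0` as `k → ∞`. -/
theorem locatingChromatic_naryTree_littleO (n : ℕ) (hn : 3 ≤ n) :
    Filter.Tendsto
      (fun k : ℕ => (locatingChromaticNumber (naryTree n k) : ℝ) / (k : ℝ))
      Filter.atTop (nhds 0) := by

  rw [NormedAddCommGroup.tendsto_nhds_zero]
  intro ε hε
  obtain ⟨t, ht1, htε⟩ : ∃ t : ℕ, 1 ≤ t ∧ (2 : ℝ) / t < ε := by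
    obtain ⟨t0, ht0⟩ := exists_nat_gt ((2 : ℝ) / ε)
    refine ⟨t0 + 1, by omega, ?_⟩
    have hp : (0 : ℝ) < ((t0 : ℝ) + 1) := by positivity
    have hc : ((t0 + 1 : ℕ) : ℝ) = (t0 : ℝ) + 1 := by push_cast; ring
    rw [hc, div_lt_iff₀ hp]
    rw [div_lt_iff₀ hε] at ht0
    nlinarith
  set K := max 36 ((t * LocNary.CC n t) * (t * LocNary.CC n t)) + 1 with hK
  rw [Filter.eventually_atTop]
  refine ⟨K, fun k hk => ?_⟩
  have hk36 : 36 ≤ k := by omega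
  have hk2 : (t * LocNary.CC n t) * (t * LocNary.CC n t) ≤ k := by omega
  have hkpos : 0 < k := by omega
  have hkR : (0 : ℝ) < (k : ℝ) := by exact_mod_cast hkpos
  have hchi := LocNary.chi_le2 n t k hn ht1 hk36 hk2
  have hnn : (0 : ℝ) ≤ (locatingChromaticNumber (naryTree n k) : ℝ) / k := by positivity
  rw [Real.norm_eq_abs, abs_of_nonneg hnn]
  have hcast : (locatingChromaticNumber (naryTree n k) : ℝ) ≤ 2 * ((k / t : ℕ) : ℝ) := by
    exact_mod_cast hchi
  have hdiv : ((k / t : ℕ) : ℝ) ≤ (k : ℝ) / t := Nat.cast_div_le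
  have hfinal : (locatingChromaticNumber (naryTree n k) : ℝ) ≤ 2 * ((k : ℝ) / t) := by
    linarith
  calc (locatingChromaticNumber (naryTree n k) : ℝ) / k
      ≤ (2 * ((k : ℝ) / t)) / k := (div_le_div_iff_of_pos_right hkR).mpr hfinal
    _ = (2 / t) * ((k : ℝ) / k) := by ring
    _ = 2 / t := by rw [div_self hkR.ne', mul_one]
    _ < ε := htε
end

section
/- Let n ≥ 2 and t ≥ 1 be integers. For every integer i with t ≤ i ≤ 2t − 1, the complete n-ary tree T(n,i) has a locating coloring with the c^t_{a,A} property (for some color a and color set A) using at most 1 + n^t + n^{2t−1} colors; in particular χ_L(T(n,i)) ≤ 1 + n^t + n^{2t−1}. -/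
/-- A coloring `c` of `T(n,k)` has the `c^t_{a,A}` property if the center gets color
`a ∉ A`, the set of colors used at distance `t` from the center is exactly `A` with
`|A| = n ^ t`, and for each `1 ≤ i ≤ t - 1` the set of colors used at distance `i`
from the center is `{1, 2}`. -/
def HasCtProperty {n k : ℕ} (t : ℕ) (c : naryVertex n k → ℕ) (a : ℕ)
    (A : Finset ℕ) : Prop :=
  c (naryRoot n k) = a ∧ a ∉ A ∧
  c '' {v | (naryTree n k).dist (naryRoot n k) v = t} = (A : Set ℕ) ∧
  A.card = n ^ t ∧
  ∀ i : ℕ, 1 ≤ i → i ≤ t - 1 →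
    c '' {v | (naryTree n k).dist (naryRoot n k) v = i} = {1, 2}


namespace NaryAux

/-- suffix of given length is unique -/
lemma suffix_eq_of_length {α} {z₁ z₂ l : List α} (h₁ : z₁ <:+ l) (h₂ : z₂ <:+ l)
    (h : z₁.length = z₂.length) : z₁ = z₂ := by
  obtain ⟨p, rfl⟩ := h₁
  obtain ⟨q, hq⟩ := h₂
  have hp : p.length = q.length := by
    have := congrArg List.length hq
    simp at this; omega
  have := congrArg (List.drop p.length) hq
  simpa [List.drop_left, hp, List.drop_left] using this.symm

/-- length of the longest common suffix of `x` and `y` -/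
def csl {α} [DecidableEq α] (y : List α) : List α → ℕ
  | [] => 0
  | a :: x => if a :: x <:+ y then x.length + 1 else csl y x

lemma csl_le_left {α} [DecidableEq α] (y : List α) : ∀ x : List α, csl y x ≤ x.length
  | [] => le_refl _
  | a :: x => by
      rw [csl]
      split
      · simp
      · exact le_trans (csl_le_left y x) (by simp)

lemma csl_self {α} [DecidableEq α] (y : List α) : csl y y = y.length := by
  cases y with
  | nil => rfl
  | cons a x => rw [csl, if_pos (List.suffix_refl _)]; simp

lemma csl_exists {α} [DecidableEq α] (y : List α) :
    ∀ x : List α, ∃ z, z <:+ x ∧ z <:+ y ∧ z.length = csl y x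
  | [] => ⟨[], List.nil_suffix, List.nil_suffix, rfl⟩
  | a :: x => by
      rw [csl]
      split
      · exact ⟨a :: x, List.suffix_refl _, by assumption, rfl⟩
      · obtain ⟨z, h1, h2, h3⟩ := csl_exists y x
        exact ⟨z, h1.trans (List.suffix_cons a x), h2, h3⟩

lemma csl_le_right {α} [DecidableEq α] (y x : List α) : csl y x ≤ y.length := by
  obtain ⟨z, _, h2, h3⟩ := csl_exists y x
  rw [← h3]; exact h2.length_le

lemma le_csl {α} [DecidableEq α] {y x z : List α} (h1 : z <:+ x) (h2 : z <:+ y) :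
    z.length ≤ csl y x := by
  induction x with
  | nil => rw [List.suffix_nil] at h1; simp [h1, csl]
  | cons a x ih =>
      rw [csl]
      rcases List.suffix_cons_iff.mp h1 with rfl | h1'
      · rw [if_pos h2]; simp
      · split
        · exact h1'.length_le.trans (by simp)
        · exact ih h1'

lemma csl_cons_le {α} [DecidableEq α] (y : List α) (a : α) (x : List α) :
    csl y (a :: x) ≤ csl y x + 1 := by
  rw [csl]
  split
  · have h1 : x <:+ y := (List.suffix_cons a x).trans (by assumption)
    have := le_csl (List.suffix_refl x) h1
    omega
  · omega

lemma le_csl_cons {α} [DecidableEq α] (y : List α) (a : α) (x : List α) :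
    csl y x ≤ csl y (a :: x) := by
  rw [csl]
  split
  · exact le_trans (csl_le_left y x) (by omega)
  · exact le_refl _

lemma csl_nil_left {α} [DecidableEq α] (x : List α) : csl ([] : List α) x = 0 := by
  have := csl_le_right ([] : List α) x
  simpa using this

/-- base-`n` value of a list of digits -/
def baseVal (n : ℕ) : List (Fin n) → ℕ
  | [] => 0
  | a :: s => a.val + n * baseVal n s

lemma baseVal_lt (n : ℕ) (hn : 1 ≤ n) : ∀ l : List (Fin n), baseVal n l < n ^ l.length
  | [] => by simp [baseVal]
  | a :: s => by
      have h1 := baseVal_lt n hn s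
      have h2 := a.isLt
      have : n * baseVal n s ≤ n * (n ^ s.length - 1) := Nat.mul_le_mul_left n (by omega)
      have h3 : n * n ^ s.length = n ^ (s.length + 1) := (pow_succ n s.length).symm ▸ (mul_comm _ _)
      have h4 : 1 ≤ n ^ s.length := Nat.one_le_pow _ _ (by omega)
      rw [baseVal]
      simp only [List.length_cons]
      calc a.val + n * baseVal n s ≤ n - 1 + n * (n ^ s.length - 1) := by omega
        _ < n ^ (s.length + 1) := by
            rw [Nat.mul_sub, h3]
            have := Nat.le_mul_of_pos_right n h4
            omega

lemma baseVal_inj (n : ℕ) (hn : 1 ≤ n) : ∀ l₁ l₂ : List (Fin n),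
    l₁.length = l₂.length → baseVal n l₁ = baseVal n l₂ → l₁ = l₂
  | [], [], _, _ => rfl
  | a :: s, b :: r, hl, hv => by
      rw [baseVal, baseVal] at hv
      have ha := a.isLt; have hb := b.isLt
      have hmod := congrArg (· % n) hv
      simp only [Nat.add_mul_mod_self_left] at hmod
      rw [Nat.mod_eq_of_lt ha, Nat.mod_eq_of_lt hb] at hmod
      have hab : a = b := Fin.ext hmod
      subst hab
      have hsr : baseVal n s = baseVal n r := by
        have := Nat.eq_of_mul_eq_mul_left (show 0 < n by omega) (by omega : n * baseVal n s = n * baseVal n r)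
        exact this
      have := baseVal_inj n hn s r (by simpa using hl) hsr
      rw [this]

lemma baseVal_surj (n : ℕ) (hn : 1 ≤ n) : ∀ (t j : ℕ), j < n ^ t →
    ∃ l : List (Fin n), l.length = t ∧ baseVal n l = j
  | 0, j, hj => by
      have : j = 0 := by simpa using hj
      exact ⟨[], rfl, by simp [baseVal, this]⟩
  | t + 1, j, hj => by
      have hd : j / n < n ^ t := by
        rw [Nat.div_lt_iff_lt_mul (by omega)]
        calc j < n ^ (t+1) := hj
          _ = n ^ t * n := pow_succ n t
      obtain ⟨l, hl, hv⟩ := baseVal_surj n hn t (j / n) hd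
      refine ⟨⟨j % n, Nat.mod_lt _ (by omega)⟩ :: l, by simpa using hl, ?_⟩
      rw [baseVal, hv]
      simpa using (Nat.mod_add_div j n)

/-- injective encoding of arbitrary lists, base `n+1` -/
def codeVal (n : ℕ) : List (Fin n) → ℕ
  | [] => 0
  | a :: s => (a.val + 1) + (n + 1) * codeVal n s

lemma codeVal_le (n : ℕ) : ∀ l : List (Fin n), codeVal n l ≤ (n + 1) ^ l.length - 1
  | [] => by simp [codeVal]
  | a :: s => by
      have h1 := codeVal_le n s
      have h2 := a.isLt
      have h4 : 1 ≤ (n + 1) ^ s.length := Nat.one_le_pow _ _ (by omega)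
      rw [codeVal]
      simp only [List.length_cons, pow_succ]
      have : (n + 1) * codeVal n s ≤ (n + 1) * ((n + 1) ^ s.length - 1) :=
        Nat.mul_le_mul_left _ (by omega)
      rw [Nat.mul_sub] at this
      have h5 : (n+1) ≤ (n + 1) * (n + 1) ^ s.length := Nat.le_mul_of_pos_right _ h4
      rw [mul_comm ((n+1) ^ s.length) (n+1)]
      omega

lemma codeVal_pos (n : ℕ) (a : Fin n) (s : List (Fin n)) : 1 ≤ codeVal n (a :: s) := by
  rw [codeVal]; omega

lemma codeVal_inj (n : ℕ) : ∀ l₁ l₂ : List (Fin n), codeVal n l₁ = codeVal n l₂ → l₁ = l₂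
  | [], [], _ => rfl
  | [], b :: r, hv => by exfalso; have := codeVal_pos n b r; rw [← hv, codeVal] at this; omega
  | a :: s, [], hv => by exfalso; have := codeVal_pos n a s; rw [hv, codeVal] at this; omega
  | a :: s, b :: r, hv => by
      rw [codeVal, codeVal] at hv
      have ha := a.isLt; have hb := b.isLt
      have hmod := congrArg (· % (n + 1)) hv
      simp only [Nat.add_mul_mod_self_left] at hmod
      rw [Nat.mod_eq_of_lt (by omega), Nat.mod_eq_of_lt (by omega)] at hmod
      have hab : a = b := Fin.ext (by omega)
      subst hab
      have hsr : codeVal n s = codeVal n r :=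
        Nat.eq_of_mul_eq_mul_left (show 0 < n + 1 by omega) (by omega)
      rw [codeVal_inj n s r hsr]

/-- value of the last element, 0 for empty list -/
def lastVal (n : ℕ) (l : List (Fin n)) : ℕ := (l.getLast?.map Fin.val).getD 0

lemma lastVal_cons_of_ne_nil (n : ℕ) (a : Fin n) (l : List (Fin n)) (h : l ≠ []) :
    lastVal n (a :: l) = lastVal n l := by
  cases l with
  | nil => exact absurd rfl h
  | cons b r => rw [lastVal, lastVal, List.getLast?_cons_cons]

lemma lastVal_concat (n : ℕ) (l : List (Fin n)) (b : Fin n) :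
    lastVal n (l ++ [b]) = b.val := by
  rw [lastVal, List.getLast?_concat]; rfl

end NaryAux

namespace NaryAux

variable {n k : ℕ}

lemma adj_cons (a : Fin n) (l : List (Fin n)) (h : (a :: l).length ≤ k)
    (h' : l.length ≤ k) : (naryTree n k).Adj ⟨a :: l, h⟩ ⟨l, h'⟩ :=
  Or.inl ⟨a, rfl⟩

lemma exists_chain_walk : ∀ (p x : List (Fin n)) (h : (p ++ x).length ≤ k)
    (h' : x.length ≤ k), ∃ W : (naryTree n k).Walk ⟨p ++ x, h⟩ ⟨x, h'⟩, W.length = p.length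
  | [], x, h, h' => ⟨SimpleGraph.Walk.nil, rfl⟩
  | a :: p, x, h, h' => by
      have h2 : (p ++ x).length ≤ k := by simp at h ⊢; omega
      obtain ⟨W, hW⟩ := exists_chain_walk p x h2 h'
      exact ⟨SimpleGraph.Walk.cons (adj_cons a (p ++ x) h h2) W, by show W.length + 1 = p.length + 1; rw [hW]⟩

lemma reachable_root : ∀ (l : List (Fin n)) (h : l.length ≤ k),
    (naryTree n k).Reachable ⟨l, h⟩ (naryRoot n k)
  | [], _ => SimpleGraph.Reachable.refl _
  | a :: l, h => by
      have h2 : l.length ≤ k := by simp at h; omega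
      exact (SimpleGraph.Adj.reachable (adj_cons a l h h2)).trans (reachable_root l h2)

lemma reachable_all (u v : naryVertex n k) : (naryTree n k).Reachable u v :=
  (reachable_root u.1 u.2).trans (reachable_root v.1 v.2).symm

lemma walk_csl_bound (y : List (Fin n)) {u w : naryVertex n k}
    (W : (naryTree n k).Walk u w) :
    u.1.length + 2 * csl y w.1 ≤ W.length + w.1.length + 2 * csl y u.1 := by
  induction W with
  | nil => omega
  | @cons u' v' w' h W ih =>
      have key : u'.1.length + 2 * csl y v'.1 ≤ 1 + v'.1.length + 2 * csl y u'.1 := by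
        rcases h with ⟨a, ha⟩ | ⟨a, ha⟩
        · have hl := congrArg List.length ha
          simp at hl
          have h1 := le_csl_cons y a v'.1
          rw [← ha] at h1
          omega
        · have hl := congrArg List.length ha
          simp at hl
          have h1 := csl_cons_le y a u'.1
          rw [← ha] at h1
          omega
      have := ih
      simp only [SimpleGraph.Walk.length_cons]
      omega

lemma dist_csl (u w : naryVertex n k) :
    u.1.length + w.1.length ≤ (naryTree n k).dist u w + 2 * csl w.1 u.1 := by
  obtain ⟨W, hW⟩ := (reachable_all u w).exists_walk_length_eq_dist
  have := walk_csl_bound w.1 W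
  rw [hW, csl_self] at this
  omega

lemma dist_chain (p x : List (Fin n)) (h : (p ++ x).length ≤ k) (h' : x.length ≤ k) :
    (naryTree n k).dist ⟨p ++ x, h⟩ ⟨x, h'⟩ = p.length := by
  obtain ⟨W, hW⟩ := exists_chain_walk p x h h'
  have hub := SimpleGraph.dist_le W
  rw [hW] at hub
  have hlb := dist_csl (⟨p ++ x, h⟩ : naryVertex n k) ⟨x, h'⟩
  have hc : csl x (p ++ x) ≤ x.length := csl_le_right x (p ++ x)
  simp only [List.length_append] at hlb
  omega

lemma dist_root (l : List (Fin n)) (h : l.length ≤ k) :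
    (naryTree n k).dist ⟨l, h⟩ (naryRoot n k) = l.length := by
  have h2 : (l ++ []).length ≤ k := by simpa using h
  have e : (⟨l ++ [], h2⟩ : naryVertex n k) = ⟨l, h⟩ := Subtype.ext (List.append_nil l)
  have := dist_chain l [] h2 (Nat.zero_le k)
  rw [e] at this
  exact this

lemma dist_root' (v : naryVertex n k) :
    (naryTree n k).dist (naryRoot n k) v = v.1.length := by
  rw [SimpleGraph.dist_comm]
  exact dist_root v.1 v.2

end NaryAux

namespace NaryAux

/-- the coloring -/
def ncol (n t : ℕ) {k : ℕ} (v : naryVertex n k) : ℕ :=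
  if v.1.length = 0 then 3
  else if v.1.length < t then 1 + (v.1.length + lastVal n v.1) % 2
  else if v.1.length = t then 4 + baseVal n v.1
  else 3 + n ^ t + codeVal n (v.1.take (v.1.length - t))

variable {n k t : ℕ}

lemma ncol_nil (v : naryVertex n k) (h : v.1.length = 0) : ncol n t v = 3 := by
  rw [ncol, if_pos h]

lemma ncol_root : ncol n t (naryRoot n k) = 3 := ncol_nil _ rfl

lemma ncol_shallow (v : naryVertex n k) (h0 : v.1.length ≠ 0) (h1 : v.1.length < t) :
    ncol n t v = 1 + (v.1.length + lastVal n v.1) % 2 := by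
  rw [ncol, if_neg h0, if_pos h1]

lemma ncol_level (v : naryVertex n k) (ht : 1 ≤ t) (h : v.1.length = t) :
    ncol n t v = 4 + baseVal n v.1 := by
  rw [ncol, if_neg (by omega), if_neg (by omega), if_pos h]

lemma ncol_deep (v : naryVertex n k) (h : t < v.1.length) :
    ncol n t v = 3 + n ^ t + codeVal n (v.1.take (v.1.length - t)) := by
  rw [ncol, if_neg (by omega), if_neg (by omega), if_neg (by omega)]

lemma ncol_shallow_bounds (v : naryVertex n k) (h0 : v.1.length ≠ 0) (h1 : v.1.length < t) :
    1 ≤ ncol n t v ∧ ncol n t v ≤ 2 := by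
  rw [ncol_shallow v h0 h1]
  have := Nat.mod_lt (v.1.length + lastVal n v.1) (show 0 < 2 by omega)
  omega

lemma ncol_level_bounds (v : naryVertex n k) (hn : 1 ≤ n) (ht : 1 ≤ t) (h : v.1.length = t) :
    4 ≤ ncol n t v ∧ ncol n t v ≤ 3 + n ^ t := by
  rw [ncol_level v ht h]
  have := baseVal_lt n hn v.1
  rw [h] at this
  omega

lemma take_ne_nil (v : naryVertex n k) (h : t < v.1.length) :
    1 ≤ codeVal n (v.1.take (v.1.length - t)) := by
  have hlen : (v.1.take (v.1.length - t)).length = v.1.length - t := by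
    rw [List.length_take]; omega
  cases hr : v.1.take (v.1.length - t) with
  | nil => rw [hr] at hlen; simp at hlen; omega
  | cons a s => exact codeVal_pos n a s

lemma ncol_deep_bounds (v : naryVertex n k) (h : t < v.1.length) :
    4 + n ^ t ≤ ncol n t v ∧
      ncol n t v ≤ 2 + n ^ t + (n + 1) ^ (v.1.length - t) := by
  rw [ncol_deep v h]
  have h1 := take_ne_nil v h
  have h2 := codeVal_le n (v.1.take (v.1.length - t))
  have hlen : (v.1.take (v.1.length - t)).length = v.1.length - t := by
    rw [List.length_take]; omega
  rw [hlen] at h2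
  have h3 : 1 ≤ (n + 1) ^ (v.1.length - t) := Nat.one_le_pow _ _ (by omega)
  omega

/-- only the root has color 3 -/
lemma ncol_root_singleton (hn : 1 ≤ n) (x : naryVertex n k) (hx : ncol n t x = 3) :
    x = naryRoot n k := by
  by_cases h0 : x.1.length = 0
  · exact Subtype.ext (List.length_eq_zero_iff.mp h0)
  · exfalso
    by_cases h1 : x.1.length < t
    · have := ncol_shallow_bounds x h0 h1
      omega
    · by_cases h2 : x.1.length = t
      · have := ncol_level_bounds x hn (by omega) h2
        omega
      · have := ncol_deep_bounds (t := t) x (by omega)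
        have h3 : 1 ≤ n ^ t := Nat.one_le_pow _ _ (by omega)
        omega

/-- level-t vertices have singleton color classes -/
lemma ncol_level_singleton (hn : 1 ≤ n) (ht : 1 ≤ t) (w : naryVertex n k)
    (hw : w.1.length = t) (x : naryVertex n k) (hx : ncol n t x = ncol n t w) :
    x = w := by
  have hwb := ncol_level_bounds w hn ht hw
  by_cases h0 : x.1.length = 0
  · exfalso; rw [ncol_nil x h0] at hx; omega
  · by_cases h1 : x.1.length < t
    · exfalso; have := ncol_shallow_bounds x h0 h1; omega
    · by_cases h2 : x.1.length = t
      · rw [ncol_level x ht h2, ncol_level w ht hw] at hx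
        exact Subtype.ext (baseVal_inj n hn x.1 w.1 (by omega) (by omega))
      · exfalso
        have := ncol_deep_bounds (t := t) x (by omega)
        have := baseVal_lt n hn w.1
        rw [hw] at this
        rw [ncol_level w ht hw] at hx
        omega

/-- the code coordinate at the color of a singleton class computes the distance -/
lemma code_singleton {V : Type*} (G : SimpleGraph V) (c : V → ℕ) (u w : V)
    (hw : ∀ x, c x = c w → x = w) :
    sInf {d : ℕ | ∃ x, c x = c w ∧ G.dist u x = d} = G.dist u w := by
  have hs : {d : ℕ | ∃ x, c x = c w ∧ G.dist u x = d} = {G.dist u w} := by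
    ext d
    constructor
    · rintro ⟨x, hx, rfl⟩
      rw [hw x hx]
      rfl
    · rintro rfl
      exact ⟨w, rfl, rfl⟩
  rw [hs]
  exact csInf_singleton _

/-- properness, directed version -/
lemma ncol_ne_of_cons (hn : 2 ≤ n) (ht : 1 ≤ t) (u v : naryVertex n k) (a : Fin n)
    (ha : u.1 = a :: v.1) : ncol n t u ≠ ncol n t v := by
  have hu : u.1.length = v.1.length + 1 := by rw [ha]; simp
  have hL : v.1.length = v.1.length := rfl
  by_cases hc1 : v.1.length + 1 < t
  · by_cases hc0 : v.1.length = 0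
    · rw [ncol_nil v hc0, ncol_shallow u (by omega) (by omega)]
      have := Nat.mod_lt (u.1.length + lastVal n u.1) (show 0 < 2 by omega)
      omega
    · rw [ncol_shallow u (by omega) (by omega), ncol_shallow v (by omega) (by omega)]
      have hlast : lastVal n u.1 = lastVal n v.1 := by
        rw [ha]
        refine lastVal_cons_of_ne_nil n a v.1 ?_
        intro hnil
        rw [hnil] at hc0
        simp at hc0
      rw [hlast, hu]
      omega
  · by_cases hc2 : v.1.length + 1 = t
    · have hub := ncol_level_bounds (t := t) u (by omega) (by omega) (by omega)
      have hvb : ncol n t v ≤ 3 := by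
        by_cases hc0 : v.1.length = 0
        · rw [ncol_nil v hc0]
        · have := ncol_shallow_bounds (t := t) v (by omega) (by omega)
          omega
      omega
    · by_cases hc3 : v.1.length = t
      · have hub := ncol_deep_bounds (t := t) u (by omega)
        have hvb := ncol_level_bounds v (by omega) (by omega) hc3
        omega
      · -- both deep
        have hLt : t < v.1.length := by omega
        rw [ncol_deep u (by omega), ncol_deep v (by omega)]
        intro heq
        have hcv : codeVal n (u.1.take (u.1.length - t)) =
            codeVal n (v.1.take (v.1.length - t)) := by omega
        have := codeVal_inj n _ _ hcv
        have hlen := congrArg List.length this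
        rw [List.length_take, List.length_take] at hlen
        rw [hu] at hlen
        omega

end NaryAux

open NaryAux

/-- Let `n ≥ 2` and `t ≥ 1`. For every `t ≤ i ≤ 2t - 1`, the tree `T(n,i)` has a
locating coloring with the `c^t_{a,A}` property using at most `1 + n^t + n^(2t-1)`
colors; in particular `χ_L(T(n,i)) ≤ 1 + n^t + n^(2t-1)`. -/
theorem naryTree_base_locating_coloring (n t : ℕ) (hn : 2 ≤ n) (ht : 1 ≤ t)
    (i : ℕ) (hi₁ : t ≤ i) (hi₂ : i ≤ 2 * t - 1) :
    (∃ (m : ℕ) (c : naryVertex n i → ℕ) (a : ℕ) (A : Finset ℕ),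
      m ≤ 1 + n ^ t + n ^ (2 * t - 1) ∧
      IsLocatingColoring (naryTree n i) m c ∧ HasCtProperty t c a A) ∧
    locatingChromaticNumber (naryTree n i) ≤ 1 + n ^ t + n ^ (2 * t - 1) := by
  have hn1 : 1 ≤ n := by omega
  have hnt : 2 ≤ n ^ t := le_trans hn (Nat.le_self_pow (by omega) n)
  have hn2t : 2 ≤ n ^ (2 * t - 1) := le_trans hn (Nat.le_self_pow (by omega) n)
  -- the color bound
  have hIcc : ∀ v : naryVertex n i, ncol n t v ∈
      Finset.Icc 1 (1 + n ^ t + n ^ (2 * t - 1)) := by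
    intro v
    rw [Finset.mem_Icc]
    by_cases h0 : v.1.length = 0
    · rw [ncol_nil v h0]; omega
    · by_cases h1 : v.1.length < t
      · have := ncol_shallow_bounds (t := t) v h0 h1; omega
      · by_cases h2 : v.1.length = t
        · have := ncol_level_bounds (t := t) v hn1 ht h2; omega
        · have hdeep := ncol_deep_bounds (t := t) v (by omega)
          have hvi := v.2
          have h2t : 2 ≤ t := by omega
          have hle : v.1.length - t ≤ t - 1 := by omega
          have hp1 : (n + 1) ^ (v.1.length - t) ≤ (n + 1) ^ (t - 1) :=
            Nat.pow_le_pow_right (by omega) hle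
          have hp2 : (n + 1) ^ (t - 1) ≤ n ^ (2 * t - 2) := by
            calc (n + 1) ^ (t - 1) ≤ (n ^ 2) ^ (t - 1) := by
                  refine Nat.pow_le_pow_left ?_ _
                  have : n * n ≥ 2 * n := Nat.mul_le_mul_right n hn
                  have : n ^ 2 = n * n := sq n
                  omega
              _ = n ^ (2 * (t - 1)) := (pow_mul n 2 (t - 1)).symm
              _ = n ^ (2 * t - 2) := by congr 1; omega
          have hp3 : 2 * n ^ (2 * t - 2) ≤ n ^ (2 * t - 1) := by
            have he : n ^ (2 * t - 1) = n * n ^ (2 * t - 2) := by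
              rw [← pow_succ']
              congr 1
              omega
            have := Nat.mul_le_mul_right (n ^ (2 * t - 2)) hn
            omega
          have hpos : 1 ≤ n ^ (2 * t - 2) := Nat.one_le_pow _ _ (by omega)
          omega
  -- properness
  have hproper : ∀ u v : naryVertex n i, (naryTree n i).Adj u v →
      ncol n t u ≠ ncol n t v := by
    rintro u v (⟨a, ha⟩ | ⟨a, ha⟩)
    · exact ncol_ne_of_cons hn ht u v a ha
    · exact (ncol_ne_of_cons hn ht v u a ha).symm
  -- the root has a singleton color class
  have hroot_single : ∀ x : naryVertex n i,
      ncol n t x = ncol n t (naryRoot n i) → x = naryRoot n i := by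
    intro x hx
    rw [ncol_root] at hx
    exact ncol_root_singleton hn1 x hx
  -- injectivity of color codes
  have hinj : Function.Injective (fun v : naryVertex n i => fun j : ℕ =>
      sInf {d : ℕ | ∃ x, ncol n t x = j ∧ (naryTree n i).dist v x = d}) := by
    intro u v h
    have hcoord : ∀ j : ℕ,
        sInf {d : ℕ | ∃ x, ncol n t x = j ∧ (naryTree n i).dist u x = d} =
        sInf {d : ℕ | ∃ x, ncol n t x = j ∧ (naryTree n i).dist v x = d} :=
      fun j => congrFun h j
    -- equal colors
    have hcuv : ncol n t v = ncol n t u := by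
      have h0 : sInf {d : ℕ | ∃ x, ncol n t x = ncol n t u ∧
          (naryTree n i).dist u x = d} = 0 :=
        Nat.le_zero.mp (Nat.sInf_le ⟨u, rfl, SimpleGraph.dist_self⟩)
      have h1 : sInf {d : ℕ | ∃ x, ncol n t x = ncol n t u ∧
          (naryTree n i).dist v x = d} = 0 := by
        rw [← hcoord (ncol n t u)]; exact h0
      rcases Nat.sInf_eq_zero.mp h1 with h2 | h2
      · obtain ⟨x, hx, hdx⟩ := h2
        rcases SimpleGraph.dist_eq_zero_iff_eq_or_not_reachable.mp hdx with heq | h3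
        · rw [heq]; exact hx
        · exact absurd (reachable_all v x) h3
      · exfalso
        have hmem : (naryTree n i).dist v u ∈
            {d : ℕ | ∃ x, ncol n t x = ncol n t u ∧ (naryTree n i).dist v x = d} :=
          ⟨u, rfl, rfl⟩
        rw [h2] at hmem
        exact hmem
    -- equal depths
    have hu' : (naryTree n i).dist u (naryRoot n i) = u.1.length := by
      rw [SimpleGraph.dist_comm]; exact dist_root' u
    have hv' : (naryTree n i).dist v (naryRoot n i) = v.1.length := by
      rw [SimpleGraph.dist_comm]; exact dist_root' v
    have hlen : v.1.length = u.1.length := by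
      have hc3 := hcoord (ncol n t (naryRoot n i))
      rw [code_singleton _ _ u (naryRoot n i) hroot_single,
        code_singleton _ _ v (naryRoot n i) hroot_single, hu', hv'] at hc3
      omega
    by_cases h0 : u.1.length = 0
    · exact Subtype.ext (by
        rw [List.length_eq_zero_iff.mp h0,
          List.length_eq_zero_iff.mp (show v.1.length = 0 by omega)])
    · by_cases h1 : u.1.length < t
      · -- shallow case
        by_contra hne
        have hww : (List.replicate (t - u.1.length) (⟨0, by omega⟩ : Fin n)
            ++ u.1).length ≤ i := by
          simp
          omega
        set w : naryVertex n i :=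
          ⟨List.replicate (t - u.1.length) (⟨0, by omega⟩ : Fin n) ++ u.1, hww⟩ with hwdef
        have hwlen : w.1.length = t := by
          show (List.replicate _ _ ++ u.1).length = t
          simp
          omega
        have hsing := ncol_level_singleton hn1 ht w hwlen
        have hcodes := hcoord (ncol n t w)
        rw [code_singleton _ _ u w hsing, code_singleton _ _ v w hsing] at hcodes
        have hdw : (naryTree n i).dist u w = t - u.1.length := by
          rw [SimpleGraph.dist_comm]
          have hch := dist_chain (k := i)
            (List.replicate (t - u.1.length) (⟨0, by omega⟩ : Fin n)) u.1 hww u.2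
          simp only [List.length_replicate] at hch; exact hch
        have hlb := dist_csl v w
        obtain ⟨z, hz1, hz2, hz3⟩ := csl_exists w.1 v.1
        have hzv : z.length ≤ v.1.length := hz1.length_le
        have hzne : z.length ≠ v.1.length := by
          intro hzl
          have hzeq : z = v.1 := suffix_eq_of_length hz1 (List.suffix_refl _) hzl
          rw [hzeq] at hz2
          have hu_suf : u.1 <:+ w.1 := List.suffix_append _ _
          have hvu : v.1 = u.1 := suffix_eq_of_length hz2 hu_suf hlen
          exact hne (Subtype.ext hvu.symm)
        rw [hdw] at hcodes
        rw [hwlen] at hlb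
        omega
      · by_cases h2 : u.1.length = t
        · -- level t
          rw [ncol_level u ht h2, ncol_level v ht (by omega)] at hcuv
          exact Subtype.ext (baseVal_inj n hn1 u.1 v.1 (by omega) (by omega))
        · -- deep case
          have hdt : t < u.1.length := by omega
          by_contra hne
          rw [ncol_deep u hdt, ncol_deep v (by omega)] at hcuv
          have htake : v.1.take (v.1.length - t) = u.1.take (u.1.length - t) :=
            codeVal_inj n _ _ (by omega)
          have hw0w : (u.1.drop (u.1.length - t)).length ≤ i := by
            rw [List.length_drop]
            have := u.2
            omega
          set w0 : naryVertex n i := ⟨u.1.drop (u.1.length - t), hw0w⟩ with hw0def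
          have hw0len : w0.1.length = t := by
            show (u.1.drop _).length = t
            rw [List.length_drop]
            omega
          have hsing := ncol_level_singleton hn1 ht w0 hw0len
          have hcodes := hcoord (ncol n t w0)
          rw [code_singleton _ _ u w0 hsing, code_singleton _ _ v w0 hsing] at hcodes
          have hdw : (naryTree n i).dist u w0 = u.1.length - t := by
            have happ : (u.1.take (u.1.length - t) ++ u.1.drop (u.1.length - t)).length ≤ i := by
              rw [List.take_append_drop]; exact u.2
            have e : (⟨u.1.take (u.1.length - t) ++ u.1.drop (u.1.length - t), happ⟩ :
                naryVertex n i) = u := Subtype.ext (List.take_append_drop _ _)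
            have hch := dist_chain (k := i) (u.1.take (u.1.length - t))
              (u.1.drop (u.1.length - t)) happ hw0w
            rw [e] at hch
            rw [List.length_take] at hch
            rw [hch]
            omega
          have hlb := dist_csl v w0
          obtain ⟨z, hz1, hz2, hz3⟩ := csl_exists w0.1 v.1
          have hzw : z.length ≤ t := by rw [← hw0len]; exact hz2.length_le
          have hzne : z.length ≠ t := by
            intro hzl
            have hzeq : z = w0.1 := suffix_eq_of_length hz2 (List.suffix_refl _)
              (by rw [hzl, hw0len])
            rw [hzeq] at hz1
            have hvd : v.1.drop (v.1.length - t) <:+ v.1 := List.drop_suffix _ _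
            have hlen2 : (v.1.drop (v.1.length - t)).length = t := by
              rw [List.length_drop]; omega
            have hdd : w0.1 = v.1.drop (v.1.length - t) :=
              suffix_eq_of_length hz1 hvd (by rw [hw0len, hlen2])
            have hvu : v.1 = u.1 := by
              calc v.1 = v.1.take (v.1.length - t) ++ v.1.drop (v.1.length - t) :=
                    (List.take_append_drop _ _).symm
                _ = u.1.take (u.1.length - t) ++ u.1.drop (u.1.length - t) := by
                    rw [htake, ← hdd]
                _ = u.1 := List.take_append_drop _ _
            exact hne (Subtype.ext hvu.symm)
          rw [hdw] at hcodes
          rw [hw0len] at hlb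
          omega
  have hloc : IsLocatingColoring (naryTree n i) (1 + n ^ t + n ^ (2 * t - 1))
      (ncol n t) := ⟨hIcc, hproper, hinj⟩
  -- the color set A
  set A : Finset ℕ := Finset.image (fun j => 4 + j) (Finset.range (n ^ t)) with hAdef
  have hAcard : A.card = n ^ t := by
    rw [hAdef, Finset.card_image_of_injective _ (fun x y hxy => by omega)]
    exact Finset.card_range _
  have hAnot : (3 : ℕ) ∉ A := by
    rw [hAdef]
    simp only [Finset.mem_image, Finset.mem_range]
    rintro ⟨j, _, hj⟩
    omega
  have himageA : ncol n t '' {v : naryVertex n i |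
      (naryTree n i).dist (naryRoot n i) v = t} = (A : Set ℕ) := by
    ext κ
    simp only [Set.mem_image, Set.mem_setOf_eq, dist_root']
    constructor
    · rintro ⟨v, hv, rfl⟩
      rw [ncol_level v ht hv]
      have hb := baseVal_lt n hn1 v.1
      rw [hv] at hb
      exact Finset.mem_coe.mpr (Finset.mem_image.mpr ⟨_, Finset.mem_range.mpr hb, rfl⟩)
    · intro hκ
      obtain ⟨j, hj, rfl⟩ := Finset.mem_image.mp (Finset.mem_coe.mp hκ)
      obtain ⟨l, hl, hv⟩ := baseVal_surj n hn1 t j (Finset.mem_range.mp hj)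
      refine ⟨⟨l, by rw [hl]; exact hi₁⟩, hl, ?_⟩
      exact (ncol_level (⟨l, by rw [hl]; exact hi₁⟩ : naryVertex n i) ht hl).trans (by rw [hv])
  have hlevels : ∀ i' : ℕ, 1 ≤ i' → i' ≤ t - 1 →
      ncol n t '' {v : naryVertex n i |
        (naryTree n i).dist (naryRoot n i) v = i'} = {1, 2} := by
    intro i' h1' h2'
    ext κ
    simp only [Set.mem_image, Set.mem_setOf_eq, dist_root']
    constructor
    · rintro ⟨v, hv, rfl⟩
      have := ncol_shallow_bounds (t := t) v (by omega) (by omega)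
      have h3 : ncol n t v = 1 ∨ ncol n t v = 2 := by omega
      rcases h3 with h | h <;> simp [h]
    · intro hκ
      have hκ12 : κ = 1 ∨ κ = 2 := by
        rcases hκ with h | h
        · left; exact h
        · right; exact h
      set b : Fin n := ⟨(κ - 1 + i') % 2,
        lt_of_lt_of_le (Nat.mod_lt _ (by omega)) hn⟩ with hbdef
      set l : List (Fin n) :=
        List.replicate (i' - 1) (⟨0, by omega⟩ : Fin n) ++ [b] with hldef
      have hll : l.length = i' := by
        rw [hldef]
        simp
        omega
      refine ⟨⟨l, by rw [hll]; omega⟩, hll, ?_⟩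
      refine (ncol_shallow (⟨l, by rw [hll]; omega⟩ : naryVertex n i) (by show l.length ≠ 0; rw [hll]; omega) (by show l.length < t; rw [hll]; omega)).trans ?_
      show 1 + (l.length + lastVal n l) % 2 = κ
      have hlast : lastVal n l = (κ - 1 + i') % 2 := lastVal_concat n _ b
      rw [hll, hlast]
      omega
  refine ⟨⟨1 + n ^ t + n ^ (2 * t - 1), ncol n t, 3, A, le_refl _, hloc,
    ncol_root, hAnot, himageA, hAcard, hlevels⟩, ?_⟩
  exact Nat.sInf_le ⟨ncol n t, hloc⟩
end
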